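/- arXiv:1709.00617 — 4 statements merged into one kernel-verified Lean document; each statement's English description precedes it below -/
import Mathlib

section
/- Let t ≥ 2 and m ≥ 1 be integers. The map sending a partition λ to the tuple (n₁(λ), n₂(λ), …, n_{t−1}(λ)) is a bijection from the set of (t, mt−1)-core partitions with distinct parts onto the set of tuples (x₁,…,x_{t−1}) of natural numbers with 0 ≤ x_i ≤ m for all 1 ≤ i ≤ t−2, x_i·x_{i+1} = 0 for all 1 ≤ i ≤ t−2, and 0 ≤ x_{t−1} ≤ m−1. -/
/-- A downward-closed finset of naturals is an initial segment. -/
lemma downclosed_eq_range (S : Finset ℕ) (h : ∀ a, a + 1 ∈ S → a ∈ S) :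
    S = Finset.range S.card := by
  have key : ∀ a ∈ S, ∀ b, b ≤ a → b ∈ S := by
    intro a ha
    induction a with
    | zero => intro b hb; simpa [Nat.le_zero.mp hb] using ha
    | succ n ih =>
      intro b hb
      rcases Nat.lt_or_ge b (n+1) with h1 | h1
      · exact ih (h n ha) b (Nat.lt_succ_iff.mp h1)
      · have : b = n + 1 := le_antisymm hb h1
        simpa [this] using ha
  rcases S.eq_empty_or_nonempty with rfl | hS
  · simp
  · have hM := S.max'_mem hS
    have h1 : S = Finset.range (S.max' hS + 1) := by
      ext b
      simp only [Finset.mem_range, Nat.lt_succ_iff]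
      exact ⟨fun hb => S.le_max' b hb, fun hb => key _ hM b hb⟩
    have h2 : S.card = S.max' hS + 1 := by
      conv_lhs => rw [h1]
      rw [Finset.card_range]
    rw [h2, ← h1]

/-- Length of a list filter as card of a filter of indices. -/
lemma length_filter_eq_card (q : ℕ → Bool) : ∀ (L : List ℕ),
    (L.filter q).length =
      ((Finset.range L.length).filter (fun k => q (L.getD k 0) = true)).card := by
  intro L
  induction L with
  | nil => simp
  | cons a L ih =>
    rw [Finset.card_filter]
    simp only [List.length_cons]
    rw [Finset.sum_range_succ']
    simp only [List.getD_cons_succ, List.getD_cons_zero]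
    rw [← Finset.card_filter]
    simp only [List.filter_cons, List.length_cons]
    by_cases h : q a = true
    · simp [h, ih]
    · simp [h, ih]
/-- A partition: a finite weakly decreasing list of positive integers. -/
structure Partn where
  parts : List ℕ
  pos : ∀ p ∈ parts, 0 < p
  sorted : parts.Pairwise (· ≥ ·)

namespace Partn

/-- The size of a partition: the sum of its parts. -/
def size (l : Partn) : ℕ := l.parts.sum

/-- The number of rows `k` (0-indexed) with `λ_k ≥ j` (the length of column `j`). -/
def colLen (l : Partn) (j : ℕ) : ℕ := (l.parts.filter (fun p => j ≤ p)).length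

/-- The hook length of the box in row `i` (0-indexed) and column `j` (1-indexed):
`λ_i − j + #{k : λ_k ≥ j} − i + 1` (with 1-indexed rows). -/
def hook (l : Partn) (i j : ℕ) : ℕ :=
  (l.parts.getD i 0 - j) + (l.colLen j - (i + 1)) + 1

/-- A partition is a `t`-core if none of its hook lengths is divisible by `t`. -/
def IsCore (t : ℕ) (l : Partn) : Prop :=
  ∀ i j : ℕ, i < l.parts.length → 1 ≤ j → j ≤ l.parts.getD i 0 → ¬ (t ∣ l.hook i j)

/-- A partition has distinct parts if its parts are strictly decreasing. -/
def DistinctParts (l : Partn) : Prop := l.parts.Pairwise (· > ·)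

/-- The β-set of a partition: `{λ_i + ℓ − i : 1 ≤ i ≤ ℓ}` (1-indexed). -/
def betaSet (l : Partn) : Finset ℕ :=
  (Finset.range l.parts.length).image
    (fun i => l.parts.getD i 0 + (l.parts.length - 1 - i))

/-- `nFn t i l` is the number of elements of the β-set of `l` congruent to `i` mod `t`. -/
def nFn (t i : ℕ) (l : Partn) : ℕ :=
  (l.betaSet.filter (fun x => x % t = i)).card



/-- The `i`-th beta number. -/
def f (l : Partn) (i : ℕ) : ℕ := l.parts.getD i 0 + (l.parts.length - 1 - i)

lemma part_pos (l : Partn) {i : ℕ} (hi : i < l.parts.length) : 1 ≤ l.parts.getD i 0 := by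
  have : l.parts.getD i 0 ∈ l.parts := by
    rw [List.getD_eq_getElem l.parts 0 hi]
    exact List.getElem_mem _
  exact l.pos _ this

lemma part_anti (l : Partn) {i j : ℕ} (hij : i ≤ j) (hj : j < l.parts.length) :
    l.parts.getD j 0 ≤ l.parts.getD i 0 := by
  rcases Nat.lt_or_ge i j with h | h
  · have hi : i < l.parts.length := lt_trans h hj
    rw [List.getD_eq_getElem l.parts 0 hj, List.getD_eq_getElem l.parts 0 hi]
    exact (List.pairwise_iff_getElem.mp l.sorted) i j hi hj h
  · have : i = j := le_antisymm hij h
    rw [this]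

lemma f_strictAnti (l : Partn) {i j : ℕ} (hij : i < j) (hj : j < l.parts.length) :
    f l j < f l i := by
  have h1 := part_anti l (le_of_lt hij) hj
  unfold f
  omega

lemma f_lt_iff (l : Partn) {i k : ℕ} (hi : i < l.parts.length) (hk : k < l.parts.length) :
    f l k < f l i ↔ i < k := by
  constructor
  · intro h
    by_contra hc
    rcases Nat.lt_or_ge k i with h2 | h2
    · exact absurd (f_strictAnti l h2 hi) (by omega)
    · have hki : k = i := by omega
      rw [hki] at h
      exact absurd h (lt_irrefl _)
  · intro h; exact f_strictAnti l h hk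

lemma f_injOn (l : Partn) {i k : ℕ} (hi : i < l.parts.length) (hk : k < l.parts.length)
    (h : f l i = f l k) : i = k := by
  by_contra hc
  rcases Nat.lt_or_ge i k with h2 | h2
  · have := f_strictAnti l h2 hk; omega
  · have h3 : k < i := by omega
    have := f_strictAnti l h3 hi; omega

lemma f_ge (l : Partn) {i : ℕ} (hi : i < l.parts.length) :
    l.parts.length - i ≤ f l i := by
  have := part_pos l hi
  unfold f
  omega

lemma mem_betaSet (l : Partn) {x : ℕ} :
    x ∈ Partn.betaSet l ↔ ∃ i, i < l.parts.length ∧ f l i = x := by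
  unfold Partn.betaSet
  simp only [Finset.mem_image, Finset.mem_range]
  exact ⟨fun ⟨i, h1, h2⟩ => ⟨i, h1, h2⟩, fun ⟨i, h1, h2⟩ => ⟨i, h1, h2⟩⟩

lemma zero_not_mem_betaSet (l : Partn) : 0 ∉ Partn.betaSet l := by
  rw [mem_betaSet]
  rintro ⟨i, hi, hfi⟩
  have h1 := part_pos l hi
  unfold f at hfi
  omega

lemma card_betaSet (l : Partn) : (Partn.betaSet l).card = l.parts.length := by
  unfold Partn.betaSet
  rw [Finset.card_image_of_injOn, Finset.card_range]
  intro i hi k hk h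
  exact f_injOn l (Finset.mem_range.mp hi) (Finset.mem_range.mp hk) h

lemma colLen_eq_card (l : Partn) (j : ℕ) :
    Partn.colLen l j =
      ((Finset.range l.parts.length).filter (fun k => j ≤ l.parts.getD k 0)).card := by
  unfold Partn.colLen
  rw [length_filter_eq_card]
  congr 1
  apply Finset.filter_congr
  intro k _
  simp

lemma lt_colLen_iff (l : Partn) {k j : ℕ} :
    k < Partn.colLen l j ↔ k < l.parts.length ∧ j ≤ l.parts.getD k 0 := by
  rw [colLen_eq_card]
  set S := (Finset.range l.parts.length).filter (fun k => j ≤ l.parts.getD k 0) with hS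
  have hdc : ∀ a, a + 1 ∈ S → a ∈ S := by
    intro a ha
    rw [hS, Finset.mem_filter, Finset.mem_range] at *
    obtain ⟨h1, h2⟩ := ha
    exact ⟨by omega, le_trans h2 (part_anti l (by omega) h1)⟩
  have := downclosed_eq_range S hdc
  constructor
  · intro h
    have : k ∈ S := by rw [this]; exact Finset.mem_range.mpr h
    rw [hS, Finset.mem_filter, Finset.mem_range] at this
    exact this
  · intro h
    have : k ∈ S := by rw [hS, Finset.mem_filter, Finset.mem_range]; exact h
    rw [downclosed_eq_range S hdc, Finset.mem_range] at this
    exact this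

lemma colLen_le (l : Partn) (j : ℕ) : Partn.colLen l j ≤ l.parts.length := by
  unfold Partn.colLen
  exact List.length_filter_le _ _

lemma colLen_anti (l : Partn) {j j' : ℕ} (h : j ≤ j') : Partn.colLen l j' ≤ Partn.colLen l j := by
  by_contra hc
  push_neg at hc
  have h1 := (lt_colLen_iff l).mp hc
  have h2 : Partn.colLen l j < Partn.colLen l j' := lt_of_le_of_lt (Nat.le_refl _) hc
  have h3 := (lt_colLen_iff l (k := Partn.colLen l j) (j := j')).mp hc
  have h4 : ¬ (Partn.colLen l j < Partn.colLen l j) := lt_irrefl _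
  exact h4 ((lt_colLen_iff l).mpr ⟨h3.1, le_trans h h3.2⟩)

/-- The complement-coding function: hooks in row `i` are `f l i - cfn l j`. -/
def cfn (l : Partn) (j : ℕ) : ℕ := j - 1 + (l.parts.length - Partn.colLen l j)

lemma cfn_facts (l : Partn) {i j : ℕ} (hi : i < l.parts.length) (hj1 : 1 ≤ j)
    (hj2 : j ≤ l.parts.getD i 0) :
    Partn.hook l i j = f l i - cfn l j ∧ cfn l j < f l i := by
  have hcl : i < Partn.colLen l j := (lt_colLen_iff l).mpr ⟨hi, hj2⟩
  have hle := colLen_le l j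
  unfold Partn.hook cfn f
  omega

lemma cfn_not_mem (l : Partn) {j : ℕ} (hj : 1 ≤ j) : cfn l j ∉ Partn.betaSet l := by
  rw [mem_betaSet]
  rintro ⟨k, hk, hfk⟩
  have hle := colLen_le l j
  unfold f at hfk
  unfold cfn at hfk
  rcases Nat.lt_or_ge (l.parts.getD k 0) j with hc | hc
  · -- colLen j ≤ k
    have h1 : ¬ (k < Partn.colLen l j) := by
      intro h
      have := (lt_colLen_iff l).mp h
      omega
    omega
  · have h1 : k < Partn.colLen l j := (lt_colLen_iff l).mpr ⟨hk, hc⟩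
    omega

lemma cfn_strictMono (l : Partn) {j j' : ℕ} (hj : 1 ≤ j) (hjj : j < j') :
    cfn l j < cfn l j' := by
  have h1 := colLen_anti l (le_of_lt hjj)
  have h2 := colLen_le l j
  have h3 := colLen_le l j'
  unfold cfn
  omega

lemma cfn_surj (l : Partn) {i c : ℕ} (hi : i < l.parts.length) (hc1 : c < f l i)
    (hc2 : c ∉ Partn.betaSet l) :
    ∃ j, 1 ≤ j ∧ j ≤ l.parts.getD i 0 ∧ cfn l j = c := by
  classical
  set T : Finset ℕ := Finset.range (f l i) \ Partn.betaSet l with hT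
  set C : Finset ℕ := (Finset.Icc 1 (l.parts.getD i 0)).image (cfn l) with hC
  have hsub : C ⊆ T := by
    intro x hx
    rw [hC, Finset.mem_image] at hx
    obtain ⟨j, hj, rfl⟩ := hx
    rw [Finset.mem_Icc] at hj
    have := cfn_facts l hi hj.1 hj.2
    rw [hT, Finset.mem_sdiff, Finset.mem_range]
    exact ⟨this.2, cfn_not_mem l hj.1⟩
  have hinter : Partn.betaSet l ∩ Finset.range (f l i)
      = (Finset.Ioo i l.parts.length).image (f l) := by
    ext x
    simp only [Finset.mem_inter, Finset.mem_range, Finset.mem_image, Finset.mem_Ioo,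
      mem_betaSet]
    constructor
    · rintro ⟨⟨k, hk, rfl⟩, hlt⟩
      exact ⟨k, ⟨(f_lt_iff l hi hk).mp hlt, hk⟩, rfl⟩
    · rintro ⟨k, ⟨hik, hk⟩, rfl⟩
      exact ⟨⟨k, hk, rfl⟩, f_strictAnti l hik hk⟩
  have hintercard : (Partn.betaSet l ∩ Finset.range (f l i)).card
      = l.parts.length - 1 - i := by
    rw [hinter, Finset.card_image_of_injOn, Nat.card_Ioo]
    · omega
    · intro a ha b hb hab
      rw [Finset.mem_coe, Finset.mem_Ioo] at ha hb
      exact f_injOn l ha.2 hb.2 hab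
  have hTeq : T = Finset.range (f l i) \ (Partn.betaSet l ∩ Finset.range (f l i)) := by
    rw [hT]; ext x; simp only [Finset.mem_sdiff, Finset.mem_inter]; tauto
  have hTcard : T.card = l.parts.getD i 0 := by
    rw [hTeq, Finset.card_sdiff_of_subset Finset.inter_subset_right, Finset.card_range, hintercard]
    have := f_ge l hi
    unfold f
    omega
  have hCcard : C.card = l.parts.getD i 0 := by
    rw [hC, Finset.card_image_of_injOn, Nat.card_Icc]
    · omega
    · intro a ha b hb hab
      rw [Finset.mem_coe, Finset.mem_Icc] at ha hb
      by_contra hne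
      rcases Nat.lt_or_ge a b with h | h
      · have := cfn_strictMono l ha.1 h; omega
      · have h2 : b < a := by omega
        have := cfn_strictMono l hb.1 h2; omega
  have heq : C = T := Finset.eq_of_subset_of_card_le hsub (by omega)
  have hcT : c ∈ T := by
    rw [hT, Finset.mem_sdiff, Finset.mem_range]; exact ⟨hc1, hc2⟩
  rw [← heq, hC, Finset.mem_image] at hcT
  obtain ⟨j, hj, hje⟩ := hcT
  rw [Finset.mem_Icc] at hj
  exact ⟨j, hj.1, hj.2, hje⟩

/-- `t`-core iff the β-set is closed under subtracting `t`. -/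
lemma isCore_iff_clo (l : Partn) {u : ℕ} (hu : 1 ≤ u) :
    Partn.IsCore u l ↔ ∀ x ∈ Partn.betaSet l, u ≤ x → x - u ∈ Partn.betaSet l := by
  constructor
  · intro hcore x hx hux
    by_contra hc
    obtain ⟨i, hi, rfl⟩ := (mem_betaSet l).mp hx
    obtain ⟨j, hj1, hj2, hje⟩ := cfn_surj l hi (by omega) hc
    have hf := cfn_facts l hi hj1 hj2
    refine hcore i j hi hj1 hj2 ?_
    rw [hf.1, hje]
    have : f l i - (f l i - u) = u := by omega
    rw [this]
  · intro hclo
    -- first: closure under subtracting multiples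
    have key : ∀ k x, x ∈ Partn.betaSet l → ∀ c, c + u * (k+1) = x → c ∉ Partn.betaSet l → False := by
      intro k
      induction k with
      | zero =>
        intro x hx c hcx hc
        have : x - u ∈ Partn.betaSet l := hclo x hx (by omega)
        have : c = x - u := by omega
        exact hc (this ▸ ‹x - u ∈ Partn.betaSet l›)
      | succ n ih =>
        intro x hx c hcx hc
        have hxu : x - u ∈ Partn.betaSet l := hclo x hx (by nlinarith)
        exact ih (x - u) hxu c (by nlinarith [Nat.sub_add_cancel (show u ≤ x by nlinarith)]) hc
    intro i j hi hj1 hj2 hdvd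
    obtain ⟨d, hd⟩ := hdvd
    have hf := cfn_facts l hi hj1 hj2
    have hhookpos : 1 ≤ Partn.hook l i j := by unfold Partn.hook; omega
    have hd1 : 1 ≤ d := by
      rcases Nat.eq_zero_or_pos d with rfl | h
      · omega
      · exact h
    have hx : f l i ∈ Partn.betaSet l := by
      rw [mem_betaSet]; exact ⟨i, hi, rfl⟩
    refine key (d-1) (f l i) hx (cfn l j) ?_ (cfn_not_mem l hj1)
    have : u * (d - 1 + 1) = u * d := by congr 1; omega
    rw [this]
    omega

lemma distinct_iff_strict (l : Partn) :
    Partn.DistinctParts l ↔ ∀ k k', k < k' → k' < l.parts.length →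
      l.parts.getD k' 0 < l.parts.getD k 0 := by
  unfold Partn.DistinctParts
  rw [List.pairwise_iff_getElem]
  constructor
  · intro h k k' hkk hk'
    have hk : k < l.parts.length := lt_trans hkk hk'
    rw [List.getD_eq_getElem l.parts 0 hk', List.getD_eq_getElem l.parts 0 hk]
    exact h k k' hk hk' hkk
  · intro h k k' hk hk' hkk
    have := h k k' hkk hk'
    rw [List.getD_eq_getElem l.parts 0 hk', List.getD_eq_getElem l.parts 0 hk] at this
    exact this

lemma distinct_iff_noSucc (l : Partn) :
    Partn.DistinctParts l ↔ ∀ x, x ∈ Partn.betaSet l → x + 1 ∉ Partn.betaSet l := by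
  rw [distinct_iff_strict]
  constructor
  · intro h x hx hx1
    obtain ⟨k', hk', he'⟩ := (mem_betaSet l).mp hx
    obtain ⟨k, hk, he⟩ := (mem_betaSet l).mp hx1
    have hlt : f l k' < f l k := by omega
    have hkk : k < k' := (f_lt_iff l hk hk').mp hlt
    have := h k k' hkk hk'
    unfold f at he he'
    omega
  · intro h k k' hkk hk'
    have hk : k < l.parts.length := lt_trans hkk hk'
    -- adjacent strict first
    have hadj : ∀ a, a + 1 < l.parts.length →
        l.parts.getD (a+1) 0 < l.parts.getD a 0 := by
      intro a ha
      have hle := part_anti l (show a ≤ a + 1 by omega) ha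
      rcases Nat.lt_or_ge (l.parts.getD (a+1) 0) (l.parts.getD a 0) with hlt | hge
      · exact hlt
      · exfalso
        have heq : l.parts.getD (a+1) 0 = l.parts.getD a 0 := by omega
        have hfa : f l (a+1) + 1 = f l a := by
          unfold f; omega
        refine h (f l (a+1)) ?_ ?_
        · rw [mem_betaSet]; exact ⟨a+1, ha, rfl⟩
        · rw [hfa, mem_betaSet]; exact ⟨a, by omega, rfl⟩
    have trans : ∀ d k0, k0 + d + 1 < l.parts.length →
        l.parts.getD (k0 + d + 1) 0 < l.parts.getD k0 0 := by
      intro d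
      induction d with
      | zero =>
        intro k0 h0
        have := hadj k0 (by omega)
        have he : k0 + 0 + 1 = k0 + 1 := by omega
        rw [he]
        exact this
      | succ n ih =>
        intro k0 h0
        have h1 := ih k0 (by omega)
        have h2 := hadj (k0 + n + 1) (by omega)
        have he : k0 + (n+1) + 1 = (k0 + n + 1) + 1 := by omega
        rw [he]
        exact lt_trans h2 h1
    have he : k' = k + (k' - k - 1) + 1 := by omega
    rw [he]
    exact trans (k' - k - 1) k (by omega)

/-- `sv B k` : the `k`-th smallest element of `B`. -/
def sv (B : Finset ℕ) (k : ℕ) : ℕ := (B.sort (·≤·)).getD k 0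

lemma sv_mem (B : Finset ℕ) {k : ℕ} (hk : k < B.card) : sv B k ∈ B := by
  unfold sv
  have hl : k < (B.sort (·≤·)).length := by rwa [Finset.length_sort]
  rw [List.getD_eq_getElem _ 0 hl]
  rw [← Finset.mem_sort (α := ℕ) (·≤·)]
  exact List.getElem_mem _

lemma sv_strict (B : Finset ℕ) {a b : ℕ} (hab : a < b) (hb : b < B.card) :
    sv B a < sv B b := by
  have hs := (Finset.sortedLT_sort B).pairwise
  rw [List.pairwise_iff_getElem] at hs
  have hlb : b < (B.sort (·≤·)).length := by rwa [Finset.length_sort]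
  have hla : a < (B.sort (·≤·)).length := by omega
  unfold sv
  rw [List.getD_eq_getElem _ 0 hla, List.getD_eq_getElem _ 0 hlb]
  exact hs a b hla hlb hab

lemma sv_gap (B : Finset ℕ) : ∀ (d a : ℕ), a + d < B.card → sv B a + d ≤ sv B (a + d) := by
  intro d
  induction d with
  | zero => intro a _; simp
  | succ m ih =>
    intro a ha
    have h1 := ih a (by omega)
    have h2 := sv_strict B (show a + m < a + (m+1) by omega) ha
    omega

lemma sv_surj (B : Finset ℕ) {x : ℕ} (hx : x ∈ B) : ∃ k, k < B.card ∧ sv B k = x := by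
  rw [← Finset.mem_sort (α := ℕ) (·≤·)] at hx
  obtain ⟨k, hk, he⟩ := List.getElem_of_mem hx
  refine ⟨k, by rwa [Finset.length_sort] at hk, ?_⟩
  unfold sv
  rw [List.getD_eq_getElem _ 0 hk]
  exact he

lemma sv_pos (B : Finset ℕ) (h0 : 0 ∉ B) {k : ℕ} (hk : k < B.card) : 1 ≤ sv B k := by
  rcases Nat.eq_zero_or_pos (sv B k) with hz | hz
  · exact absurd (hz ▸ sv_mem B hk) h0
  · exact hz

lemma sv_ge (B : Finset ℕ) (h0 : 0 ∉ B) {k : ℕ} (hk : k < B.card) : k + 1 ≤ sv B k := by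
  have h1 := sv_gap B k 0 (by omega)
  have h2 := sv_pos B h0 (show 0 < B.card by omega)
  simp only [Nat.zero_add] at h1
  omega

/-- Build a partition from a β-set not containing 0. -/
def partnOfBeta (B : Finset ℕ) (h0 : 0 ∉ B) : Partn where
  parts := List.ofFn (fun k : Fin B.card => sv B (B.card - 1 - (k : ℕ)) - (B.card - 1 - (k : ℕ)))
  pos := by
    intro p hp
    rw [List.mem_ofFn] at hp
    obtain ⟨k, rfl⟩ := hp
    have hk := k.isLt
    have := sv_ge B h0 (show B.card - 1 - (k : ℕ) < B.card by omega)
    omega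
  sorted := by
    rw [List.pairwise_iff_getElem]
    intro i j hi hj hij
    rw [List.getElem_ofFn, List.getElem_ofFn]
    rw [List.length_ofFn] at hi hj
    simp only
    have hgap := sv_gap B (j - i) (B.card - 1 - j) (by omega)
    have heq : B.card - 1 - j + (j - i) = B.card - 1 - i := by omega
    rw [heq] at hgap
    have := sv_ge B h0 (show B.card - 1 - j < B.card by omega)
    omega

lemma partnOfBeta_length (B : Finset ℕ) (h0 : 0 ∉ B) :
    (partnOfBeta B h0).parts.length = B.card := by
  unfold partnOfBeta
  simp

lemma partnOfBeta_getD (B : Finset ℕ) (h0 : 0 ∉ B) {k : ℕ} (hk : k < B.card) :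
    (partnOfBeta B h0).parts.getD k 0 = sv B (B.card - 1 - k) - (B.card - 1 - k) := by
  have hl : k < (partnOfBeta B h0).parts.length := by rwa [partnOfBeta_length]
  rw [List.getD_eq_getElem _ 0 hl]
  unfold partnOfBeta
  simp
  exact List.getElem_ofFn _

lemma f_partnOfBeta (B : Finset ℕ) (h0 : 0 ∉ B) {k : ℕ} (hk : k < B.card) :
    f (partnOfBeta B h0) k = sv B (B.card - 1 - k) := by
  unfold f
  rw [partnOfBeta_getD B h0 hk, partnOfBeta_length]
  have := sv_ge B h0 (show B.card - 1 - k < B.card by omega)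
  omega

lemma betaSet_partnOfBeta (B : Finset ℕ) (h0 : 0 ∉ B) :
    Partn.betaSet (partnOfBeta B h0) = B := by
  ext x
  rw [mem_betaSet, partnOfBeta_length]
  constructor
  · rintro ⟨i, hi, rfl⟩
    rw [f_partnOfBeta B h0 hi]
    exact sv_mem B (by omega)
  · intro hx
    obtain ⟨k, hk, he⟩ := sv_surj B hx
    refine ⟨B.card - 1 - k, by omega, ?_⟩
    rw [f_partnOfBeta B h0 (by omega)]
    have : B.card - 1 - (B.card - 1 - k) = k := by omega
    rw [this, he]

lemma sv_unique (B : Finset ℕ) (n : ℕ) (hn : B.card = n) (g : ℕ → ℕ)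
    (hmono : ∀ a b, a < b → b < n → g a < g b) (hmem : ∀ k, k < n → g k ∈ B) :
    ∀ k, k < n → sv B k = g k := by
  have hinj : ∀ a b, a < n → b < n → g a = g b → a = b := by
    intro a b ha hb he
    by_contra hne
    rcases Nat.lt_or_ge a b with h | h
    · have := hmono a b h hb; omega
    · have hba : b < a := by omega
      have := hmono b a hba ha; omega
  have himg : (Finset.range n).image g = B := by
    apply Finset.eq_of_subset_of_card_le
    · intro x hx
      rw [Finset.mem_image] at hx
      obtain ⟨k, hk, rfl⟩ := hx
      exact hmem k (Finset.mem_range.mp hk)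
    · rw [Finset.card_image_of_injOn, Finset.card_range, hn]
      intro a ha b hb
      exact hinj a b (Finset.mem_range.mp ha) (Finset.mem_range.mp hb)
  intro k
  induction k using Nat.strong_induction_on with
  | _ k ih =>
    intro hk
    rcases lt_trichotomy (sv B k) (g k) with h | h | h
    · exfalso
      have hsvmem : sv B k ∈ (Finset.range n).image g := by
        rw [himg]; exact sv_mem B (by omega)
      rw [Finset.mem_image] at hsvmem
      obtain ⟨j, hj, hje⟩ := hsvmem
      rw [Finset.mem_range] at hj
      have hjk : j < k := by
        by_contra hc
        push_neg at hc
        rcases Nat.eq_or_lt_of_le hc with rfl | h2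
        · omega
        · have := hmono k j h2 hj; omega
      have := ih j hjk (by omega)
      have := sv_strict B hjk (by omega)
      omega
    · exact h
    · exfalso
      obtain ⟨j, hj, hje⟩ := sv_surj B (hmem k hk)
      have hjk : j < k := by
        by_contra hc
        push_neg at hc
        rcases Nat.eq_or_lt_of_le hc with rfl | h2
        · omega
        · have := sv_strict B h2 (by omega); omega
      have := ih j hjk (by omega)
      have := hmono j k hjk hk
      omega

lemma partnOfBeta_betaSet (l : Partn) :
    partnOfBeta (Partn.betaSet l) (zero_not_mem_betaSet l) = l := by
  set B := Partn.betaSet l with hB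
  have hcard : B.card = l.parts.length := card_betaSet l
  have hsv : ∀ k, k < l.parts.length → sv B k = f l (l.parts.length - 1 - k) := by
    apply sv_unique B l.parts.length hcard
    · intro a b hab hb
      exact f_strictAnti l (by omega) (by omega)
    · intro k hk
      rw [hB, mem_betaSet]
      exact ⟨l.parts.length - 1 - k, by omega, rfl⟩
  have hlen : (partnOfBeta B (zero_not_mem_betaSet l)).parts.length = l.parts.length := by
    rw [partnOfBeta_length, hcard]
  have hparts : (partnOfBeta B (zero_not_mem_betaSet l)).parts = l.parts := by
    apply List.ext_getElem (by rw [hlen])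
    intro k h1 h2
    rw [← List.getD_eq_getElem _ 0 h1, ← List.getD_eq_getElem _ 0 h2]
    rw [partnOfBeta_getD B _ (by omega), hcard]
    rw [hsv (l.parts.length - 1 - k) (by omega)]
    have he : l.parts.length - 1 - (l.parts.length - 1 - k) = k := by
      rw [hlen] at h1; omega
    rw [he]
    unfold f
    omega
  rcases l with ⟨p, hp, hs⟩
  rcases hE : partnOfBeta B (zero_not_mem_betaSet ⟨p, hp, hs⟩) with ⟨p', hp', hs'⟩
  rw [hE] at hparts
  simp only at hparts
  simp [hparts]

/-- Number of beta numbers in residue class `i` mod `t`. -/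
def nB (t : ℕ) (B : Finset ℕ) (i : ℕ) : ℕ := (B.filter (fun x => x % t = i)).card

lemma class_zero (t : ℕ) (ht : 1 ≤ t) (B : Finset ℕ) (h0 : 0 ∉ B)
    (hc : ∀ x ∈ B, t ≤ x → x - t ∈ B) :
    ∀ z, z ∈ B → z % t ≠ 0 := by
  intro z
  induction z using Nat.strong_induction_on with
  | _ z ih =>
    intro hz hmod
    rcases Nat.eq_zero_or_pos z with rfl | hpos
    · exact h0 hz
    · have hzt : t ≤ z := by
        rcases Nat.lt_or_ge z t with h | h
        · rw [Nat.mod_eq_of_lt h] at hmod; omega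
        · exact h
      have h1 : z - t ∈ B := hc z hz hzt
      have h2 : (z - t) % t = 0 := by
        rw [Nat.mod_eq_sub_mod hzt] at hmod
        exact hmod
      exact ih (z - t) (by omega) h1 h2

lemma mem_runA (t : ℕ) (ht : 2 ≤ t) (B : Finset ℕ) (h0 : 0 ∉ B)
    (hc : ∀ x ∈ B, t ≤ x → x - t ∈ B) {i : ℕ} (hi1 : 1 ≤ i) (hit : i < t) (a : ℕ) :
    i + a * t ∈ B ↔ a < nB t B i := by
  have hmod : ∀ b : ℕ, (i + b * t) % t = i := by
    intro b
    rw [Nat.add_mul_mod_self_right, Nat.mod_eq_of_lt hit]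
  have hdiv : ∀ b : ℕ, (i + b * t) / t = b := by
    intro b
    rw [Nat.add_mul_div_right _ _ (show 0 < t by omega), Nat.div_eq_of_lt hit]
    omega
  set S : Finset ℕ := (B.filter (fun x => x % t = i)).image (fun z => z / t) with hS
  have hcardS : S.card = nB t B i := by
    rw [hS, Finset.card_image_of_injOn]
    · rfl
    · intro u hu v hv he
      rw [Finset.mem_coe, Finset.mem_filter] at hu hv
      have hu2 := Nat.div_add_mod u t
      have hv2 := Nat.div_add_mod v t
      simp only at he
      have : t * (u / t) = t * (v / t) := by rw [he]
      omega
  have hdc : ∀ a, a + 1 ∈ S → a ∈ S := by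
    intro b hb
    rw [hS, Finset.mem_image] at hb
    obtain ⟨z, hz, hze⟩ := hb
    rw [Finset.mem_filter] at hz
    have hzval : z = i + (b + 1) * t := by
      have := Nat.div_add_mod z t
      have h2 : t * (z / t) = t * (b+1) := by rw [hze]
      have h3 : t * (b+1) = (b+1) * t := mul_comm _ _
      omega
    have hzt : t ≤ z := by
      have : 1 * t ≤ (b+1) * t := Nat.mul_le_mul_right t (by omega)
      omega
    have h1 : z - t ∈ B := hc z hz.1 hzt
    have h2 : z - t = i + b * t := by
      rw [hzval]
      have : (b+1) * t = b * t + t := by ring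
      omega
    rw [hS, Finset.mem_image]
    refine ⟨i + b * t, ?_, hdiv b⟩
    rw [Finset.mem_filter]
    exact ⟨h2 ▸ h1, hmod b⟩
  have hrange := downclosed_eq_range S hdc
  constructor
  · intro hmem
    have : a ∈ S := by
      rw [hS, Finset.mem_image]
      exact ⟨i + a * t, Finset.mem_filter.mpr ⟨hmem, hmod a⟩, hdiv a⟩
    rw [hrange, Finset.mem_range, hcardS] at this
    exact this
  · intro hlt
    have : a ∈ S := by rw [hrange, Finset.mem_range, hcardS]; exact hlt
    rw [hS, Finset.mem_image] at this
    obtain ⟨z, hz, hze⟩ := this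
    rw [Finset.mem_filter] at hz
    have hzval : z = i + a * t := by
      have := Nat.div_add_mod z t
      have h2 : t * (z / t) = t * a := by rw [hze]
      have h3 : t * a = a * t := mul_comm _ _
      omega
    exact hzval ▸ hz.1

lemma mem_char (t : ℕ) (ht : 2 ≤ t) (B : Finset ℕ) (h0 : 0 ∉ B)
    (hc : ∀ x ∈ B, t ≤ x → x - t ∈ B) (z : ℕ) :
    z ∈ B ↔ (1 ≤ z % t ∧ z / t < nB t B (z % t)) := by
  constructor
  · intro hz
    have hmod : z % t ≠ 0 := class_zero t (by omega) B h0 hc z hz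
    have hlt : z % t < t := Nat.mod_lt z (by omega)
    have hzval : z = z % t + (z / t) * t := by
      have := Nat.div_add_mod z t
      have : t * (z / t) = (z / t) * t := mul_comm _ _
      omega
    refine ⟨by omega, ?_⟩
    rw [← mem_runA t ht B h0 hc (by omega) hlt (z / t)]
    exact hzval ▸ hz
  · rintro ⟨h1, h2⟩
    have hlt : z % t < t := Nat.mod_lt z (by omega)
    have hzval : z = z % t + (z / t) * t := by
      have := Nat.div_add_mod z t
      have : t * (z / t) = (z / t) * t := mul_comm _ _
      omega
    have := (mem_runA t ht B h0 hc h1 hlt (z / t)).mpr h2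
    exact hzval ▸ this

lemma mod_div_helper (t : ℕ) {i : ℕ} (hit : i < t) (b : ℕ) :
    (i + b * t) % t = i ∧ (i + b * t) / t = b := by
  have ht : 0 < t := by omega
  constructor
  · rw [Nat.add_mul_mod_self_right, Nat.mod_eq_of_lt hit]
  · rw [Nat.add_mul_div_right _ _ ht, Nat.div_eq_of_lt hit]
    omega

lemma betaSet_injective {l l' : Partn} (h : Partn.betaSet l = Partn.betaSet l') : l = l' := by
  have h1 := partnOfBeta_betaSet l
  have h2 := partnOfBeta_betaSet l'
  rw [← h1, ← h2]
  congr 1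

end Partn

open Partn

/-- `λ ↦ (n₁(λ), …, n_(t−1)(λ))` is a bijection from `(t, mt−1)`-core partitions with
distinct parts onto sequences `(x₁, …, x_(t−1))` with `xᵢ ≤ m` for `i ≤ t−2`,
`xᵢ·x_(i+1) = 0`, and `x_(t−1) ≤ m−1`. -/
theorem bijection_t_mt_sub_one (t m : ℕ) (ht : 2 ≤ t) (hm : 1 ≤ m) :
    Set.BijOn (fun lam : Partn => fun i : Fin (t - 1) => Partn.nFn t ((i : ℕ) + 1) lam)
      {lam : Partn | (lam.IsCore t ∧ lam.IsCore (m * t - 1) ∧ lam.DistinctParts)}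
      {x : Fin (t - 1) → ℕ | (∀ i : Fin (t - 1), (i : ℕ) + 1 ≤ t - 2 → x i ≤ m) ∧
          (∀ i j : Fin (t - 1), (j : ℕ) = (i : ℕ) + 1 → x i * x j = 0) ∧
          ∀ i : Fin (t - 1), (i : ℕ) + 1 = t - 1 → x i ≤ m - 1} := by
  have hmt : 2 ≤ m * t := by nlinarith
  have hs1 : 1 ≤ m * t - 1 := by omega
  -- key fact about sources
  have hsrc : ∀ lam : Partn, lam ∈ {lam : Partn | (lam.IsCore t ∧ lam.IsCore (m * t - 1) ∧ lam.DistinctParts)} →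
      (0 ∉ Partn.betaSet lam) ∧
      (∀ x ∈ Partn.betaSet lam, t ≤ x → x - t ∈ Partn.betaSet lam) ∧
      (∀ x ∈ Partn.betaSet lam, m * t - 1 ≤ x → x - (m * t - 1) ∈ Partn.betaSet lam) ∧
      (∀ x, x ∈ Partn.betaSet lam → x + 1 ∉ Partn.betaSet lam) := by
    rintro lam ⟨hcT, hcS, hd⟩
    exact ⟨zero_not_mem_betaSet lam, (isCore_iff_clo lam (by omega)).mp hcT,
      (isCore_iff_clo lam hs1).mp hcS, (distinct_iff_noSucc lam).mp hd⟩
  have hnfn : ∀ (lam : Partn) (i : ℕ), Partn.nFn t i lam = nB t (Partn.betaSet lam) i := by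
    intro lam i; rfl
  constructor
  · -- MapsTo
    intro lam hlam
    obtain ⟨h0, hcT, hcS, hns⟩ := hsrc lam hlam
    have hrun := fun {i : ℕ} (hi1 : 1 ≤ i) (hit : i < t) (a : ℕ) =>
      mem_runA t ht (Partn.betaSet lam) h0 hcT hi1 hit a
    refine ⟨?_, ?_, ?_⟩
    · -- x i ≤ m for i+1 ≤ t-2
      intro i hi
      simp only [hnfn]
      by_contra hc
      push_neg at hc
      set i' := (i : ℕ) + 1 with hi'
      have hi'2 : 1 ≤ i' ∧ i' < t := by omega
      have h1 : i' + m * t ∈ Partn.betaSet lam := (hrun hi'2.1 hi'2.2 m).mpr (by omega)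
      have h2 : i' + m * t - (m * t - 1) ∈ Partn.betaSet lam := hcS _ h1 (by omega)
      have h3 : i' + 1 ∈ Partn.betaSet lam := by
        have : i' + m * t - (m * t - 1) = i' + 1 := by omega
        rwa [this] at h2
      have h4 : i' ∈ Partn.betaSet lam := by
        have := (hrun hi'2.1 hi'2.2 0).mpr (by omega)
        simpa using this
      exact hns i' h4 h3
    · -- products vanish
      intro i j hij
      simp only [hnfn]
      by_contra hc
      have hcc := Nat.mul_ne_zero_iff.mp hc
      have hi2 : 1 ≤ (i : ℕ) + 1 ∧ (i : ℕ) + 1 < t := by have := i.isLt; omega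
      have hj2 : 1 ≤ (j : ℕ) + 1 ∧ (j : ℕ) + 1 < t := by have := j.isLt; omega
      have h4 : (i : ℕ) + 1 ∈ Partn.betaSet lam := by
        have := (hrun hi2.1 hi2.2 0).mpr (by omega)
        simpa using this
      have h5 : (j : ℕ) + 1 ∈ Partn.betaSet lam := by
        have := (hrun hj2.1 hj2.2 0).mpr (by omega)
        simpa using this
      have h6 : (i : ℕ) + 1 + 1 = (j : ℕ) + 1 := by omega
      exact hns _ h4 (h6 ▸ h5)
    · -- last coordinate
      intro i hi
      simp only [hnfn]
      by_contra hc
      push_neg at hc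
      have h1 : (i : ℕ) + 1 + (m - 1) * t ∈ Partn.betaSet lam :=
        (hrun (by omega) (by omega) (m - 1)).mpr (by omega)
      have heq : (i : ℕ) + 1 + (m - 1) * t = m * t - 1 := by
        have h2 : (m - 1 + 1) * t = (m - 1) * t + t := by ring
        have h3 : m - 1 + 1 = m := by omega
        rw [h3] at h2
        omega
      rw [heq] at h1
      have h2 := hcS _ h1 (le_refl _)
      simp only [Nat.sub_self] at h2
      exact h0 h2
  constructor
  · -- InjOn
    intro lam hlam lam' hlam' he
    obtain ⟨h0, hcT, _, _⟩ := hsrc lam hlam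
    obtain ⟨h0', hcT', _, _⟩ := hsrc lam' hlam'
    apply betaSet_injective
    ext z
    rw [mem_char t ht _ h0 hcT z, mem_char t ht _ h0' hcT' z]
    by_cases hz : 1 ≤ z % t
    · have hlt : z % t < t := Nat.mod_lt z (by omega)
      have hfin : z % t - 1 < t - 1 := by omega
      have := congrFun he ⟨z % t - 1, hfin⟩
      simp only at this
      have hval : z % t - 1 + 1 = z % t := by omega
      rw [hval] at this
      rw [hnfn, hnfn] at this
      rw [this]
    · simp only [hz, false_and]
  · -- SurjOn
    intro x hx
    obtain ⟨hx1, hx2, hx3⟩ := hx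
    set y : ℕ → ℕ := fun a => if h : a < t - 1 then x ⟨a, h⟩ else 0 with hy
    have hylt : ∀ a (h : a < t - 1), y a = x ⟨a, h⟩ := by
      intro a h; rw [hy]; simp only [dif_pos h]
    have hy_le : ∀ a, y a ≤ m := by
      intro a
      by_cases h : a < t - 1
      · rw [hylt a h]
        rcases Nat.lt_or_ge (a + 1) (t - 1) with h2 | h2
        · exact hx1 ⟨a, h⟩ (by simpa using (by omega : a + 1 ≤ t - 2))
        · have h3 : a + 1 = t - 1 := by omega
          have := hx3 ⟨a, h⟩ (by simpa using h3)
          omega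
      · rw [hy]; simp only [dif_neg h]; omega
    have hylast : y (t - 2) ≤ m - 1 := by
      have h : t - 2 < t - 1 := by omega
      rw [hylt _ h]
      exact hx3 ⟨t - 2, h⟩ (by simp; omega)
    have hyprod : ∀ a, a + 1 < t - 1 → y a * y (a + 1) = 0 := by
      intro a ha
      rw [hylt a (by omega), hylt (a + 1) ha]
      exact hx2 ⟨a, by omega⟩ ⟨a + 1, ha⟩ (by simp)
    classical
    set B : Finset ℕ := (Finset.range (m * t)).filter
      (fun z => 1 ≤ z % t ∧ z / t < y (z % t - 1)) with hBdef
    have hmulid : (m - 1) * t + t = m * t := by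
      have h9 : (m - 1 + 1) * t = (m - 1) * t + t := by ring
      have h8 : m - 1 + 1 = m := by omega
      rw [h8] at h9
      omega
    have hbound : ∀ z, 1 ≤ z % t → z / t < y (z % t - 1) → z < m * t := by
      intro z h1 h2
      have hlt : z % t < t := Nat.mod_lt z (by omega)
      have hya := hy_le (z % t - 1)
      have hz : z % t + (z / t) * t = z := by
        have h3 := Nat.div_add_mod z t
        have h4 : t * (z / t) = (z / t) * t := mul_comm _ _
        omega
      have h5 : z / t ≤ m - 1 := by omega
      have h6 : (z / t) * t ≤ (m - 1) * t := Nat.mul_le_mul_right t h5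
      omega
    have hmem : ∀ z, z ∈ B ↔ (1 ≤ z % t ∧ z / t < y (z % t - 1)) := by
      intro z
      rw [hBdef, Finset.mem_filter, Finset.mem_range]
      constructor
      · rintro ⟨_, h⟩; exact h
      · intro h; exact ⟨hbound z h.1 h.2, h⟩
    have h0 : 0 ∉ B := by
      rw [hmem]
      simp [Nat.zero_mod]
    have hcloT : ∀ z ∈ B, t ≤ z → z - t ∈ B := by
      intro z hz htz
      rw [hmem] at hz ⊢
      obtain ⟨h1, h2⟩ := hz
      have hlt : z % t < t := Nat.mod_lt z (by omega)
      have hdm := Nat.div_add_mod z t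
      have h4 : t * (z / t) = (z / t) * t := mul_comm _ _
      have hq1 : 1 ≤ z / t := (Nat.one_le_div_iff (by omega)).mpr htz
      have hprod : (z / t - 1 + 1) * t = (z / t - 1) * t + t := by ring
      have hq2 : z / t - 1 + 1 = z / t := by omega
      rw [hq2] at hprod
      have hzsub : z - t = z % t + (z / t - 1) * t := by omega
      have hmd := mod_div_helper t hlt (z / t - 1)
      rw [hzsub, hmd.1, hmd.2]
      exact ⟨h1, by omega⟩
    have hNoSucc : ∀ z, z ∈ B → z + 1 ∉ B := by
      intro z hz hz1
      rw [hmem] at hz hz1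
      obtain ⟨ha1, ha2⟩ := hz
      have hlt : z % t < t := Nat.mod_lt z (by omega)
      have hdm := Nat.div_add_mod z t
      have h4 : t * (z / t) = (z / t) * t := mul_comm _ _
      rcases Nat.lt_or_ge (z % t) (t - 1) with hcase | hcase
      · -- z % t ≤ t - 2
        have hz1val : z + 1 = (z % t + 1) + (z / t) * t := by omega
        have hmd := mod_div_helper t (show z % t + 1 < t by omega) (z / t)
        obtain ⟨hb1, hb2⟩ := hz1
        rw [hz1val] at hb1 hb2
        rw [hmd.1] at hb1
        rw [hmd.1, hmd.2] at hb2
        have hprod := hyprod (z % t - 1) (by omega)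
        have he : z % t - 1 + 1 = z % t := by omega
        rw [he] at hprod
        have he2 : z % t + 1 - 1 = z % t := by omega
        rw [he2] at hb2
        have hge0 : 0 ≤ z / t := Nat.zero_le _
        rcases Nat.mul_eq_zero.mp hprod with h | h
        · omega
        · omega
      · -- z % t = t - 1 : z+1 divisible by t
        have hzt : z % t = t - 1 := by omega
        have hz1val : z + 1 = 0 + (z / t + 1) * t := by
          have hprod : (z / t + 1) * t = (z / t) * t + t := by ring
          omega
        have hmd := mod_div_helper t (show 0 < t by omega) (z / t + 1)
        rw [hz1val, hmd.1] at hz1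
        omega
    have hcloS : ∀ z ∈ B, m * t - 1 ≤ z → z - (m * t - 1) ∈ B := by
      intro z hz hsz
      exfalso
      have hzr : z < m * t := by
        rw [hmem] at hz
        exact hbound z hz.1 hz.2
      have hzeq : z = m * t - 1 := by omega
      rw [hmem] at hz
      obtain ⟨hz1, hz2⟩ := hz
      have hval : z = (t - 1) + (m - 1) * t := by omega
      have hmd := mod_div_helper t (show t - 1 < t by omega) (m - 1)
      rw [hval] at hz2
      rw [hmd.1, hmd.2] at hz2
      have h9 : t - 1 - 1 = t - 2 := by omega
      rw [h9] at hz2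
      have := hylast
      have hge0 : 0 ≤ z / t := Nat.zero_le _
      omega
    have hnB : ∀ i : ℕ, 1 ≤ i → i < t → nB t B i = y (i - 1) := by
      intro i h1 h2
      have hset : B.filter (fun x => x % t = i)
          = (Finset.range (y (i - 1))).image (fun a => i + a * t) := by
        ext z
        rw [Finset.mem_filter, hmem z, Finset.mem_image]
        constructor
        · rintro ⟨⟨hz1, hz2⟩, hz3⟩
          rw [hz3] at hz2
          refine ⟨z / t, Finset.mem_range.mpr hz2, ?_⟩
          have hdm := Nat.div_add_mod z t
          have h4 : t * (z / t) = (z / t) * t := mul_comm _ _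
          omega
        · rintro ⟨a, ha, rfl⟩
          rw [Finset.mem_range] at ha
          have hmd := mod_div_helper t h2 a
          rw [hmd.1, hmd.2]
          exact ⟨⟨h1, by rwa [show i - 1 = i - 1 from rfl]⟩, rfl⟩
      unfold nB
      rw [hset, Finset.card_image_of_injOn, Finset.card_range]
      intro a ha b hb he
      simp only at he
      have ha1 := (mod_div_helper t h2 a).2
      have hb1 := (mod_div_helper t h2 b).2
      rw [he] at ha1
      omega
    refine ⟨Partn.partnOfBeta B h0, ⟨?_, ?_, ?_⟩, ?_⟩
    · exact (isCore_iff_clo _ (show 1 ≤ t by omega)).mpr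
        (by rw [betaSet_partnOfBeta]; exact hcloT)
    · exact (isCore_iff_clo _ hs1).mpr
        (by rw [betaSet_partnOfBeta]; exact hcloS)
    · exact (distinct_iff_noSucc _).mpr
        (by rw [betaSet_partnOfBeta]; exact hNoSucc)
    · funext i
      show Partn.nFn t ((i : ℕ) + 1) (Partn.partnOfBeta B h0) = x i
      unfold Partn.nFn
      rw [betaSet_partnOfBeta]
      have := hnB ((i : ℕ) + 1) (by omega) (by have := i.isLt; omega)
      unfold nB at this
      rw [this]
      simp only [Nat.add_sub_cancel]
      rw [hylt (i : ℕ) i.isLt]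
end

section
/- Let t be a positive integer and λ a t-core partition. Then the size of λ satisfies |λ| = Σ_{i=1}^{t−1} ( i·n_i(λ) + t·C(n_i(λ), 2) ) − C( Σ_{i=1}^{t−1} n_i(λ), 2 ), where C(n,2) = n(n−1)/2. -/
namespace CoreAux
open Partn

/-- abbreviation for the i-th part -/
def pt (l : Partn) (i : ℕ) : ℕ := l.parts.getD i 0

lemma pt_pos (l : Partn) {i : ℕ} (hi : i < l.parts.length) : 0 < pt l i := by
  have : pt l i ∈ l.parts := by
    rw [pt, List.getD_eq_getElem _ _ hi]
    exact List.getElem_mem _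
  exact l.pos _ this

lemma pt_antitone (l : Partn) {i k : ℕ} (hik : i ≤ k) (hk : k < l.parts.length) :
    pt l k ≤ pt l i := by
  rcases eq_or_lt_of_le hik with rfl | h
  · exact le_refl _
  · have hs := l.sorted
    rw [List.pairwise_iff_get] at hs
    have hi : i < l.parts.length := lt_trans h hk
    have h2 := hs ⟨i, hi⟩ ⟨k, hk⟩ h
    rw [pt, pt, List.getD_eq_getElem _ _ hi, List.getD_eq_getElem _ _ hk]
    exact h2

lemma colLen_le (l : Partn) (j : ℕ) : l.colLen j ≤ l.parts.length :=
  List.length_filter_le _ _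

lemma lt_colLen_iff_aux (j : ℕ) : ∀ (P : List ℕ), P.Pairwise (· ≥ ·) → ∀ k, k < P.length →
    (j ≤ P.getD k 0 ↔ k < (P.filter (fun p => j ≤ p)).length) := by
  intro P
  induction P with
  | nil => intro _ k hk; simp at hk
  | cons a tl ih =>
    intro hs k hk
    have hs' : tl.Pairwise (· ≥ ·) := hs.of_cons
    have hle : ∀ b ∈ tl, b ≤ a := fun b hb => List.rel_of_pairwise_cons hs hb
    by_cases hja : j ≤ a
    · rw [List.filter_cons_of_pos (by simpa using hja)]
      cases k with
      | zero => simpa using hja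
      | succ k =>
        have hk' : k < tl.length := by simpa using hk
        simpa [List.getD_cons_succ, Nat.succ_lt_succ_iff] using ih hs' k hk'
    · have hnil : tl.filter (fun p => j ≤ p) = [] := by
        rw [List.filter_eq_nil_iff]
        intro b hb
        simp only [decide_eq_true_eq]
        exact fun h => hja (le_trans h (hle b hb))
      rw [List.filter_cons_of_neg (by simpa using hja), hnil]
      simp only [List.length_nil, Nat.not_lt_zero, iff_false]
      cases k with
      | zero => simpa using hja
      | succ k =>
        have hk' : k < tl.length := by simpa using hk
        rw [List.getD_cons_succ]
        intro h
        have : tl.getD k 0 ∈ tl := by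
          rw [List.getD_eq_getElem _ _ hk']; exact List.getElem_mem _
        exact hja (le_trans h (hle _ this))

lemma lt_colLen_iff (l : Partn) {k : ℕ} (hk : k < l.parts.length) (j : ℕ) :
    j ≤ pt l k ↔ k < l.colLen j :=
  lt_colLen_iff_aux j l.parts l.sorted k hk

lemma colLen_one (l : Partn) : l.colLen 1 = l.parts.length := by
  rw [colLen, List.filter_eq_self.mpr]
  intro a ha
  simp only [decide_eq_true_eq]
  exact l.pos a ha

/-- beta function -/
def bt (l : Partn) (i : ℕ) : ℕ := pt l i + (l.parts.length - 1 - i)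

lemma mem_betaSet_iff (l : Partn) (x : ℕ) :
    x ∈ l.betaSet ↔ ∃ i, i < l.parts.length ∧ bt l i = x := by
  simp [betaSet, bt, pt, Finset.mem_image, Finset.mem_range]

lemma bt_strictAnti (l : Partn) {i k : ℕ} (hik : i < k) (hk : k < l.parts.length) :
    bt l k < bt l i := by
  have h1 := pt_antitone l (le_of_lt hik) hk
  have : 0 < pt l i := pt_pos l (lt_trans hik hk)
  unfold bt
  omega

lemma bt_injOn (l : Partn) : Set.InjOn (bt l) (Finset.range l.parts.length) := by
  intro a ha b hb hab
  simp only [Finset.coe_range, Set.mem_Iio] at ha hb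
  by_contra hne
  rcases Nat.lt_or_ge a b with h | h
  · exact absurd hab (Nat.ne_of_gt (bt_strictAnti l h hb))
  · have hba : b < a := lt_of_le_of_ne h (Ne.symm hne)
    exact absurd hab.symm (Nat.ne_of_gt (bt_strictAnti l hba ha))

end CoreAux

namespace CoreAux
open Partn

lemma card_betaSet (l : Partn) : l.betaSet.card = l.parts.length := by
  rw [betaSet, Finset.card_image_of_injOn, Finset.card_range]
  exact bt_injOn l


lemma sum_betaSet (l : Partn) :
    ∑ x ∈ l.betaSet, (x : ℤ) = (l.size : ℤ) + (l.parts.length.choose 2 : ℤ) := by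
  have h1 : ∑ x ∈ l.betaSet, (x : ℤ) = ∑ i ∈ Finset.range l.parts.length, (bt l i : ℤ) := by
    rw [betaSet, Finset.sum_image]
    · rfl
    · intro a ha b hb hab
      exact bt_injOn l (by simpa using ha) (by simpa using hb) hab
  have h2 : ∀ P : List ℕ, P.sum = ∑ i ∈ Finset.range P.length, P.getD i 0 := by
    intro P
    induction P with
    | nil => simp
    | cons a tl ih =>
      rw [List.sum_cons, List.length_cons, Finset.sum_range_succ', ih]
      simp only [List.getD_cons_succ, List.getD_cons_zero]
      ring
  have h3 : ∑ i ∈ Finset.range l.parts.length, (l.parts.length - 1 - i) =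
      l.parts.length.choose 2 := by
    rw [Finset.sum_range_reflect (fun i => i) l.parts.length]
    have g1 := Finset.sum_range_id_mul_two l.parts.length
    have g2 := Nat.choose_two_right l.parts.length
    omega
  have hnat : ∑ i ∈ Finset.range l.parts.length, bt l i = l.size + l.parts.length.choose 2 := by
    unfold bt pt
    rw [Finset.sum_add_distrib, h3, size, h2]
  rw [h1, ← Nat.cast_sum, hnat]
  push_cast
  ring

lemma hook_first (l : Partn) {i : ℕ} (hi : i < l.parts.length) : l.hook i 1 = bt l i := by
  have h1 : 1 ≤ pt l i := pt_pos l hi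
  have h2 : l.colLen 1 = l.parts.length := colLen_one l
  rw [hook, h2]
  unfold bt
  have : pt l i = l.parts.getD i 0 := rfl
  omega

lemma beta_not_dvd {t : ℕ} {l : Partn} (hcore : l.IsCore t) {x : ℕ} (hx : x ∈ l.betaSet) :
    ¬ t ∣ x := by
  rw [mem_betaSet_iff] at hx
  obtain ⟨i, hi, rfl⟩ := hx
  have := hcore i 1 hi le_rfl (pt_pos l hi)
  rwa [hook_first l hi] at this

lemma colLen_antitone (l : Partn) {j j' : ℕ} (h : j ≤ j') : l.colLen j' ≤ l.colLen j := by
  unfold colLen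
  apply List.Sublist.length_le
  apply List.monotone_filter_right
  intro x hx
  simp only [decide_eq_true_eq] at hx ⊢
  omega

/-- KEY: the abacus property of t-cores: β-set is closed under subtracting t. -/
lemma beta_down {t : ℕ} (ht : 0 < t) {l : Partn} (hcore : l.IsCore t)
    {x : ℕ} (hx : x ∈ l.betaSet) (hxt : t ≤ x) : x - t ∈ l.betaSet := by
  by_contra hnot
  rw [mem_betaSet_iff] at hx
  obtain ⟨i, hi, hbi⟩ := hx
  set L := l.parts.length with hL
  -- integer target
  set xs : ℤ := (x : ℤ) - t with hxs
  have hbi' : (pt l i : ℤ) + (L - 1 - i) = x := by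
    rw [← hbi]; unfold bt; push_cast; omega
  have hpti : 0 < pt l i := pt_pos l hi
  set T : Finset ℕ := (Finset.Icc 1 (pt l i)).filter
      (fun j => (L : ℤ) - 1 + j - l.colLen j ≤ xs) with hT
  have hc1 : l.colLen 1 = L := colLen_one l
  have h1T : 1 ∈ T := by
    rw [hT, Finset.mem_filter, Finset.mem_Icc]
    refine ⟨⟨le_rfl, hpti⟩, ?_⟩
    rw [hc1]
    push_cast
    omega
  have hTne : T.Nonempty := ⟨1, h1T⟩
  set j := T.max' hTne with hj
  have hjmem : j ∈ T := T.max'_mem hTne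
  rw [hT, Finset.mem_filter, Finset.mem_Icc] at hjmem
  obtain ⟨⟨hj1, hjp⟩, hjx⟩ := hjmem
  -- j ≤ pt l i so i < colLen j
  have hicj : i < l.colLen j := (lt_colLen_iff l hi j).mp hjp
  have hcjL : l.colLen j ≤ L := colLen_le l j
  -- main claim : X j = xs
  have hXj : (L : ℤ) - 1 + j - l.colLen j = xs := by
    by_contra hne
    have hlt : (L : ℤ) - 1 + j - l.colLen j < xs := lt_of_le_of_ne hjx hne
    -- find k with bt l k = x - t, contradiction with hnot
    have hfind : ∃ k, k < L ∧ (bt l k : ℤ) = xs := by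
      rcases Nat.lt_or_ge j (pt l i) with hcase | hcase
      · -- j < pt l i : j+1 not in T by maximality
        have hj1T : j + 1 ∉ T := by
          intro hmem
          have := T.le_max' _ hmem
          omega
        have hXj1 : xs < (L : ℤ) + j - l.colLen (j+1) := by
          by_contra hge
          push_neg at hge
          apply hj1T
          rw [hT, Finset.mem_filter, Finset.mem_Icc]
          refine ⟨⟨by omega, by omega⟩, ?_⟩
          push_cast
          push_cast at hge
          omega
        have hcj1 : l.colLen (j+1) ≤ l.colLen j := colLen_antitone l (by omega)
        -- k := L - 1 + j - xs
        have hxsle : xs ≤ (L : ℤ) - 1 + j := by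
          have : (0:ℤ) ≤ l.colLen (j+1) := by positivity
          omega
        have hxs0 : 0 ≤ xs := by omega
        obtain ⟨k, hk⟩ : ∃ k : ℕ, (k : ℤ) = (L : ℤ) - 1 + j - xs := by
          refine ⟨((L : ℤ) - 1 + j - xs).toNat, ?_⟩
          rw [Int.toNat_of_nonneg]; omega
        have hkcj : k < l.colLen j := by omega
        have hkc1 : l.colLen (j+1) ≤ k := by omega
        have hkL : k < L := by omega
        have hge : j ≤ pt l k := (lt_colLen_iff l hkL j).mpr hkcj
        have hle2 : pt l k ≤ j := by
          by_contra hgt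
          push_neg at hgt
          have : k < l.colLen (j+1) := (lt_colLen_iff l hkL (j+1)).mp hgt
          omega
        refine ⟨k, hkL, ?_⟩
        unfold bt
        push_cast
        omega
      · -- j = pt l i : use rows below i
        have hjeq : j = pt l i := le_antisymm hjp hcase
        have hxub : xs < (pt l i : ℤ) + (L - 1 - i) := by
          rw [hbi']; omega
        obtain ⟨k, hk⟩ : ∃ k : ℕ, (k : ℤ) = (pt l i : ℤ) + L - 1 - xs := by
          refine ⟨((pt l i : ℤ) + L - 1 - xs).toNat, ?_⟩
          rw [Int.toNat_of_nonneg (by omega)]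
        have hki : i < k := by omega
        have hkc : k < l.colLen j := by rw [hjeq] at hlt ⊢; omega
        have hkL : k < L := by omega
        have hge : pt l i ≤ pt l k := by
          have := (lt_colLen_iff l hkL j).mpr hkc
          omega
        have hle2 : pt l k ≤ pt l i := pt_antitone l (le_of_lt hki) hkL
        refine ⟨k, hkL, ?_⟩
        unfold bt
        push_cast
        omega
    obtain ⟨k, hkL, hbk⟩ := hfind
    apply hnot
    rw [mem_betaSet_iff]
    refine ⟨k, hkL, ?_⟩
    have : ((x - t : ℕ) : ℤ) = xs := by push_cast; omega
    omega
  -- now hook i j = t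
  have hhook : l.hook i j = t := by
    have hd : l.hook i j = (pt l i - j) + (l.colLen j - (i + 1)) + 1 := rfl
    omega
  exact hcore i j hi hj1 hjp (hhook ▸ dvd_refl t)

end CoreAux

namespace CoreAux
open Partn

lemma downclosed_eq_range (S : Finset ℕ) (h : ∀ m, m + 1 ∈ S → m ∈ S) :
    S = Finset.range S.card := by
  have key : ∀ d k, k ∈ S → k - d ∈ S := by
    intro d
    induction d with
    | zero => intro k hk; simpa using hk
    | succ d ih =>
      intro k hk
      have hd := ih k hk
      rcases Nat.eq_zero_or_pos (k - d) with h0 | hpos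
      · have : k - (d+1) = 0 := by omega
        rw [this, ← h0]; exact hd
      · have : (k - (d+1)) + 1 = k - d := by omega
        exact h _ (by rw [this]; exact hd)
  have hiff : ∀ m, m ∈ S ↔ m < S.card := by
    intro m
    constructor
    · intro hm
      have hsub : Finset.range (m+1) ⊆ S := by
        intro a ha
        rw [Finset.mem_range] at ha
        have : m - (m - a) = a := by omega
        exact this ▸ key (m - a) m hm
      have := Finset.card_le_card hsub
      rw [Finset.card_range] at this
      omega
    · intro hm
      by_contra hnot
      have hsub : S ⊆ Finset.range m := by
        intro a ha
        rw [Finset.mem_range]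
        by_contra hge
        push_neg at hge
        have : a - (a - m) = m := by omega
        exact hnot (this ▸ key (a - m) a ha)
      have := Finset.card_le_card hsub
      rw [Finset.card_range] at this
      omega
  ext n
  rw [hiff, Finset.mem_range]

lemma sum_range_id (n : ℕ) : ∑ m ∈ Finset.range n, m = n.choose 2 := by
  have g1 := Finset.sum_range_id_mul_two n
  have g2 := Nat.choose_two_right n
  omega

/-- sum over a residue class of the beta set -/
lemma sum_residue {t : ℕ} (ht : 0 < t) {l : Partn} (hcore : l.IsCore t) (r : ℕ) :
    ∑ x ∈ l.betaSet.filter (fun x => x % t = r), (x : ℤ) =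
      (r : ℤ) * (nFn t r l) + (t : ℤ) * ((nFn t r l).choose 2 : ℤ) := by
  set Br := l.betaSet.filter (fun x => x % t = r) with hBr
  have hmod : ∀ x ∈ Br, x % t = r := by
    intro x hx; rw [hBr, Finset.mem_filter] at hx; exact hx.2
  have hmem : ∀ x ∈ Br, x ∈ l.betaSet := by
    intro x hx; rw [hBr, Finset.mem_filter] at hx; exact hx.1
  set S := Br.image (fun x => x / t) with hS
  have hinj : Set.InjOn (fun x => x / t) Br := by
    intro a ha b hb hab
    simp only at hab
    have h1 := hmod a (by simpa using ha)
    have h2 := hmod b (by simpa using hb)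
    have hab' : a / t = b / t := hab
    have e1 := Nat.div_add_mod a t
    have e2 := Nat.div_add_mod b t
    rw [hab'] at e1
    omega
  have hcardS : S.card = nFn t r l := by
    rw [hS, Finset.card_image_of_injOn hinj, nFn, hBr]
  have hdown : ∀ m, m + 1 ∈ S → m ∈ S := by
    intro m hm
    rw [hS, Finset.mem_image] at hm
    obtain ⟨x, hx, hxm⟩ := hm
    have hxm' : x / t = m + 1 := hxm
    have hxt : t ≤ x := by
      refine (Nat.one_le_div_iff ht).mp ?_
      omega
    have hx' : x - t ∈ l.betaSet := beta_down ht hcore (hmem x hx) hxt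
    have hr' : (x - t) % t = r := by
      have : x - t + t = x := by omega
      calc (x - t) % t = (x - t + t) % t := (Nat.add_mod_right _ _).symm
        _ = r := by rw [this]; exact hmod x hx
    have hdiv : (x - t) / t = m := by
      have h1 : (x - t + t) / t = (x - t) / t + 1 := Nat.add_div_right _ ht
      have h2 : x - t + t = x := by omega
      rw [h2] at h1
      omega
    rw [hS, Finset.mem_image]
    exact ⟨x - t, by rw [hBr, Finset.mem_filter]; exact ⟨hx', by simpa using hr'⟩, hdiv⟩
  have hSrange : S = Finset.range (nFn t r l) := by
    rw [← hcardS]; exact downclosed_eq_range S hdown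
  have hsum1 : ∑ x ∈ Br, (x : ℤ) = ∑ x ∈ Br, ((t : ℤ) * (x / t : ℕ) + r) := by
    apply Finset.sum_congr rfl
    intro x hx
    have h1 := hmod x hx
    have h2 := Nat.div_add_mod x t
    have hxeq : x = t * (x / t) + r := by omega
    calc (x : ℤ) = ((t * (x / t) + r : ℕ) : ℤ) := by rw [← hxeq]
      _ = (t : ℤ) * ((x / t : ℕ) : ℤ) + (r : ℤ) := by rw [Nat.cast_add, Nat.cast_mul]
  have hsum2 : ∑ x ∈ Br, ((x / t : ℕ) : ℤ) = ∑ m ∈ S, (m : ℤ) := by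
    rw [hS, Finset.sum_image (fun a ha b hb hab => hinj (by simpa using ha) (by simpa using hb) hab)]
  have hsum3 : ∑ m ∈ S, (m : ℤ) = ((nFn t r l).choose 2 : ℤ) := by
    rw [hSrange, ← Nat.cast_sum, sum_range_id]
  have hcardBr : Br.card = nFn t r l := by rw [nFn, hBr]
  rw [hsum1, Finset.sum_add_distrib, ← Finset.mul_sum, hsum2, hsum3, Finset.sum_const, hcardBr]
  push_cast
  ring

lemma maps_to {t : ℕ} (ht : 0 < t) {l : Partn} (hcore : l.IsCore t) :
    ∀ x ∈ l.betaSet, x % t ∈ Finset.Icc 1 (t - 1) := by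
  intro x hx
  have hnd := beta_not_dvd hcore hx
  have hne : x % t ≠ 0 := fun h => hnd (Nat.dvd_iff_mod_eq_zero.mpr h)
  have hlt : x % t < t := Nat.mod_lt x ht
  rw [Finset.mem_Icc]
  omega

end CoreAux



/-- The size of a `t`-core partition in terms of the numbers `nᵢ(λ)`. -/
theorem size_eq_sum_nFn (t : ℕ) (ht : 0 < t) (lam : Partn) (hcore : lam.IsCore t) :
    (lam.size : ℤ) = (∑ i ∈ Finset.Icc 1 (t - 1),
        ((i : ℤ) * Partn.nFn t i lam + (t : ℤ) * ((Partn.nFn t i lam).choose 2 : ℤ)))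
      - ((∑ i ∈ Finset.Icc 1 (t - 1), Partn.nFn t i lam).choose 2 : ℤ) := by
  have hmaps := CoreAux.maps_to ht hcore
  have hsumfib := Finset.sum_fiberwise_of_maps_to hmaps (fun x : ℕ => (x : ℤ))
  have hcardfib := Finset.card_eq_sum_card_fiberwise hmaps
  have hsum := CoreAux.sum_betaSet lam
  have hL : lam.betaSet.card = lam.parts.length := CoreAux.card_betaSet lam
  have hres : ∀ r ∈ Finset.Icc 1 (t-1),
      ∑ x ∈ lam.betaSet.filter (fun x => x % t = r), (x : ℤ) =
      (r : ℤ) * (Partn.nFn t r lam) + (t : ℤ) * ((Partn.nFn t r lam).choose 2 : ℤ) :=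
    fun r _ => CoreAux.sum_residue ht hcore r
  have hcardr : ∀ r, (lam.betaSet.filter (fun x => x % t = r)).card = Partn.nFn t r lam :=
    fun r => rfl
  have hLsum : lam.parts.length = ∑ r ∈ Finset.Icc 1 (t-1), Partn.nFn t r lam := by
    rw [← hL, hcardfib]
    exact Finset.sum_congr rfl fun r _ => hcardr r
  have hbig : ∑ x ∈ lam.betaSet, (x : ℤ) =
      ∑ r ∈ Finset.Icc 1 (t-1),
        ((r : ℤ) * (Partn.nFn t r lam) + (t : ℤ) * ((Partn.nFn t r lam).choose 2 : ℤ)) := by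
    rw [← hsumfib]
    exact Finset.sum_congr rfl hres
  rw [hbig, hLsum] at hsum
  omega
end

section
/- Let t ≥ 2 and m ≥ 1 be integers, and let λ be a (t, mt+1)-core partition with distinct parts. Then β(λ) ⊆ {1, 2, …, mt−1}; in particular, n_i(λ) ≤ m for every 1 ≤ i ≤ t−1, and n_i(λ)·n_{i+1}(λ) = 0 for every 1 ≤ i ≤ t−2. -/
namespace PartnAux
open Partn

/-- row index function -/
def pa (l : Partn) (k : ℕ) : ℕ := l.parts.getD k 0

/-- β-set element function -/
def bfun (l : Partn) (k : ℕ) : ℕ := pa l k + (l.parts.length - 1 - k)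

lemma mem_betaSet {l : Partn} {x : ℕ} :
    x ∈ l.betaSet ↔ ∃ k, k < l.parts.length ∧ bfun l k = x := by
  simp [betaSet, bfun, pa, Finset.mem_image, Finset.mem_range]

lemma pa_pos {l : Partn} {k : ℕ} (hk : k < l.parts.length) : 1 ≤ pa l k := by
  have h1 : pa l k = l.parts[k] := List.getD_eq_getElem l.parts 0 hk
  have := l.pos _ (h1 ▸ List.getElem_mem hk)
  omega

lemma pa_anti {l : Partn} {k k' : ℕ} (hkk : k < k') (hk' : k' < l.parts.length) :
    pa l k' ≤ pa l k := by
  have h1 : pa l k = l.parts[k]'(hkk.trans hk') := List.getD_eq_getElem l.parts 0 (hkk.trans hk')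
  have h2 : pa l k' = l.parts[k'] := List.getD_eq_getElem l.parts 0 hk'
  have := l.sorted.rel_get_of_lt (a := ⟨k, hkk.trans hk'⟩) (b := ⟨k', hk'⟩) hkk
  simp only [List.get_eq_getElem] at this
  omega

lemma pa_strict_anti {l : Partn} (hd : l.DistinctParts) {k k' : ℕ} (hkk : k < k')
    (hk' : k' < l.parts.length) : pa l k' < pa l k := by
  have h1 : pa l k = l.parts[k]'(hkk.trans hk') := List.getD_eq_getElem l.parts 0 (hkk.trans hk')
  have h2 : pa l k' = l.parts[k'] := List.getD_eq_getElem l.parts 0 hk'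
  have := hd.rel_get_of_lt (a := ⟨k, hkk.trans hk'⟩) (b := ⟨k', hk'⟩) hkk
  simp only [List.get_eq_getElem] at this
  omega

/-- strict decrease of β elements -/
lemma bfun_strict_anti {l : Partn} {k k' : ℕ} (hkk : k < k') (hk' : k' < l.parts.length) :
    bfun l k' < bfun l k := by
  have := pa_anti hkk hk'
  unfold bfun
  omega

lemma bfun_pos {l : Partn} {k : ℕ} (hk : k < l.parts.length) : 1 ≤ bfun l k := by
  have := pa_pos hk; unfold bfun; omega

/-- no element of the β-set is 0; elements ≥ 1 -/
lemma beta_pos {l : Partn} {x : ℕ} (hx : x ∈ l.betaSet) : 1 ≤ x := by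
  obtain ⟨k, hk, rfl⟩ := mem_betaSet.mp hx
  exact bfun_pos hk

/-- with distinct parts, no two consecutive integers in the β-set -/
lemma no_consec {l : Partn} (hd : l.DistinctParts) {v : ℕ}
    (h1 : v ∈ l.betaSet) (h2 : v + 1 ∈ l.betaSet) : False := by
  obtain ⟨k', hk', hb'⟩ := mem_betaSet.mp h1
  obtain ⟨k, hk, hb⟩ := mem_betaSet.mp h2
  unfold bfun pa at hb hb'
  rcases lt_trichotomy k k' with h | h | h
  · have := pa_strict_anti hd h hk'
    unfold pa at this
    omega
  · subst h; omega
  · have := pa_strict_anti hd h hk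
    unfold pa at this
    omega

/-- prefix property of sorted filter lengths -/
lemma aux_filter : ∀ (L : List ℕ), L.Pairwise (· ≥ ·) → ∀ j k, k < L.length →
    (j ≤ L.getD k 0 ↔ k < (L.filter (fun p => j ≤ p)).length) := by
  intro L
  induction L with
  | nil => simp
  | cons a tl ih =>
    intro hs j k hk
    have hs' := List.pairwise_cons.mp hs
    by_cases hja : j ≤ a
    · rw [List.filter_cons_of_pos (by simpa using hja)]
      cases k with
      | zero => simpa using hja
      | succ k =>
        simp only [List.getD_cons_succ, List.length_cons]
        rw [ih hs'.2 j k (by simpa using hk)]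
        omega
    · have htl : tl.filter (fun p => j ≤ p) = [] := by
        rw [List.filter_eq_nil_iff]
        intro p hp
        have := hs'.1 p hp
        simp only [decide_eq_true_eq]
        omega
      rw [List.filter_cons_of_neg (by simpa using hja), htl]
      cases k with
      | zero => simpa using hja
      | succ k =>
        simp only [List.getD_cons_succ, List.length_nil]
        have hk' : k < tl.length := by simpa using hk
        have h1 : tl.getD k 0 = tl[k] := List.getD_eq_getElem tl 0 hk'
        have h2 := hs'.1 _ (h1 ▸ List.getElem_mem hk')
        constructor
        · intro h; omega
        · omega

/-- k-th part is ≥ j iff k < colLen j -/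
lemma colLen_iff {l : Partn} {j k : ℕ} (hk : k < l.parts.length) :
    j ≤ pa l k ↔ k < l.colLen j :=
  aux_filter l.parts l.sorted j k hk

lemma colLen_le {l : Partn} (j : ℕ) : l.colLen j ≤ l.parts.length :=
  List.length_filter_le _ _

/-- downward closed predicates on `range n` count as prefixes -/
lemma prefix_count {n : ℕ} (p : ℕ → Prop) [DecidablePred p]
    (hmono : ∀ k k', k ≤ k' → k' < n → p k' → p k) {k : ℕ} (hk : k < n) :
    p k ↔ k < ((Finset.range n).filter p).card := by
  constructor
  · intro hpk
    have hsub : Finset.range (k + 1) ⊆ (Finset.range n).filter p := by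
      intro x hx
      rw [Finset.mem_range] at hx
      rw [Finset.mem_filter, Finset.mem_range]
      exact ⟨by omega, hmono x k (by omega) hk hpk⟩
    have := Finset.card_le_card hsub
    simp only [Finset.card_range] at this
    omega
  · intro hc
    by_contra hpk
    have hsub : (Finset.range n).filter p ⊆ Finset.range k := by
      intro x hx
      rw [Finset.mem_filter, Finset.mem_range] at hx
      rw [Finset.mem_range]
      by_contra hxk
      exact hpk (hmono k x (by omega) hx.1 hx.2)
    have := Finset.card_le_card hsub
    simp only [Finset.card_range] at this
    omega

/-- Key abacus lemma: the β-set of an s-core is closed under subtracting s. -/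
lemma closure {l : Partn} {s : ℕ} (hs : 1 ≤ s) (hcore : l.IsCore s) {x : ℕ}
    (hx : x ∈ l.betaSet) (hsx : s ≤ x) : x - s ∈ l.betaSet := by
  by_contra hv
  obtain ⟨i, hi, hbi⟩ := mem_betaSet.mp hx
  set n := l.parts.length with hn
  set v := x - s with hvdef
  -- c := number of β elements > v
  set c := ((Finset.range n).filter (fun k => v < bfun l k)).card with hc
  have hmono : ∀ k k', k ≤ k' → k' < n → v < bfun l k' → v < bfun l k := by
    intro k k' hkk hk' h
    rcases eq_or_lt_of_le hkk with rfl | hlt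
    · exact h
    · exact lt_of_lt_of_le h (le_of_lt (bfun_strict_anti hlt hk'))
  have hpc : ∀ k, k < n → (v < bfun l k ↔ k < c) := fun k hk => prefix_count _ hmono hk
  have hxv : v < x := by omega
  have hic : i < c := (hpc i hi).mp (by omega)
  have hcn : c ≤ n := by
    have := Finset.card_le_card (Finset.filter_subset (fun k => v < bfun l k) (Finset.range n))
    simpa using this
  -- n - c ≤ v : the β elements ≤ v are distinct elements of [1, v]
  have hncv : n - c ≤ v := by
    have hsub : ((Finset.range n).filter (fun k => ¬ v < bfun l k)).card ≤
        (Finset.Icc 1 v).card := by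
      apply Finset.card_le_card_of_injOn (fun k => bfun l k)
      · intro k hkmem
        rw [Finset.mem_coe, Finset.mem_filter, Finset.mem_range] at hkmem
        rw [Finset.mem_coe, Finset.mem_Icc]
        exact ⟨bfun_pos hkmem.1, by dsimp only; omega⟩
      · intro a ha b hb hab
        rw [Finset.mem_coe, Finset.mem_filter, Finset.mem_range] at ha hb
        by_contra hne
        rcases lt_or_gt_of_ne hne with h | h
        · exact absurd hab (ne_of_gt (bfun_strict_anti h hb.1))
        · exact absurd hab (ne_of_lt (bfun_strict_anti h ha.1))
    rw [Nat.card_Icc] at hsub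
    have := Finset.card_filter_add_card_filter_not
      (s := Finset.range n) (p := fun k => v < bfun l k)
    simp only [Finset.card_range] at this
    omega
  set j := v + 1 + c - n with hj
  have hj1 : 1 ≤ j := by omega
  have hjeq : j + n = v + 1 + c := by omega
  -- colLen j = c
  have hcol : l.colLen j = c := by
    have hup : c ≤ l.colLen j := by
      have h1 : v < bfun l (c - 1) := (hpc (c - 1) (by omega)).mpr (by omega)
      have h2 : j ≤ pa l (c - 1) := by
        unfold bfun at h1
        omega
      have := (colLen_iff (l := l) (j := j) (k := c - 1) (by omega)).mp h2
      omega
    have hdown : l.colLen j ≤ c := by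
      rcases eq_or_lt_of_le hcn with h | h
      · rw [h]; exact colLen_le j
      · by_contra hgt
        have h2 : j ≤ pa l c := (colLen_iff (l := l) (j := j) (k := c) h).mpr (by omega)
        have h3 : ¬ v < bfun l c := fun hcon => by
          have := (hpc c h).mp hcon; omega
        have h4 : bfun l c = v := by
          unfold bfun at h3 ⊢
          omega
        exact hv (mem_betaSet.mpr ⟨c, h, by omega⟩)
    omega
  have hjpai : j ≤ pa l i := (colLen_iff hi).mpr (by omega)
  have hhook : l.hook i j = s := by
    unfold hook
    rw [hcol]
    show (pa l i - j) + (c - (i + 1)) + 1 = s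
    unfold bfun at hbi
    omega
  exact hcore i j hi hj1 hjpai (hhook ▸ dvd_refl s)

/-- chain: subtract multiples of t -/
lemma chain {l : Partn} {t : ℕ} (ht : 1 ≤ t) (hcore : l.IsCore t) {x : ℕ}
    (hx : x ∈ l.betaSet) : ∀ k, k * t ≤ x → x - k * t ∈ l.betaSet := by
  intro k
  induction k with
  | zero => simpa using hx
  | succ k ih =>
    intro hkt
    have hmul : (k + 1) * t = k * t + t := by ring
    have h1 : x - (k + 1) * t = (x - k * t) - t := by omega
    rw [h1]
    exact closure ht hcore (ih (by omega)) (by omega)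

lemma mod_mem {l : Partn} {t : ℕ} (ht : 1 ≤ t) (hcore : l.IsCore t) {x : ℕ}
    (hx : x ∈ l.betaSet) : x % t ∈ l.betaSet := by
  have h1 := Nat.mod_add_div x t
  have hcomm : t * (x / t) = x / t * t := Nat.mul_comm t (x / t)
  have h2 := chain ht hcore hx (x / t) (by omega)
  have : x - x / t * t = x % t := by omega
  rwa [this] at h2

end PartnAux

open PartnAux in
/-- The β-set of a `(t, mt+1)`-core partition with distinct parts lies in `{1, …, mt−1}`. -/
theorem betaSet_subset_t_mt_add_one (t m : ℕ) (ht : 2 ≤ t) (hm : 1 ≤ m) (lam : Partn)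
    (hlam : (lam.IsCore t ∧ lam.IsCore (m * t + 1) ∧ lam.DistinctParts)) :
    lam.betaSet ⊆ Finset.Icc 1 (m * t - 1) ∧
      (∀ i : ℕ, 1 ≤ i → i ≤ t - 1 → Partn.nFn t i lam ≤ m) ∧
      ∀ i : ℕ, 1 ≤ i → i ≤ t - 2 → Partn.nFn t i lam * Partn.nFn t (i + 1) lam = 0 := by
  obtain ⟨hc1, hc2, hd⟩ := hlam
  have ht1 : 1 ≤ t := by omega
  have hsub : lam.betaSet ⊆ Finset.Icc 1 (m * t - 1) := by
    intro x hx
    rw [Finset.mem_Icc]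
    refine ⟨beta_pos hx, ?_⟩
    by_contra hupper
    have hmt : 1 ≤ m * t := Nat.one_le_iff_ne_zero.mpr (Nat.mul_ne_zero (by omega) (by omega))
    have hcommm : m * t = t * m := Nat.mul_comm m t
    have hxmt : m * t ≤ x := by omega
    have hmod : x % t ∈ lam.betaSet := mod_mem ht1 hc1 hx
    have hmodpos : 1 ≤ x % t := beta_pos hmod
    have hxne : x ≠ m * t := by
      intro h
      rw [h] at hmodpos
      simp [Nat.mul_mod_left] at hmodpos
    have hxge : m * t + 1 ≤ x := by omega
    have hy : x - (m * t + 1) ∈ lam.betaSet := closure (by omega) hc2 hx hxge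
    have hy1 : x - m * t ∈ lam.betaSet := chain ht1 hc1 hx m hxmt
    have : x - (m * t + 1) + 1 = x - m * t := by omega
    exact no_consec hd hy (this ▸ hy1)
  refine ⟨hsub, ?_, ?_⟩
  · intro i _ _
    unfold Partn.nFn
    have : (lam.betaSet.filter (fun x => x % t = i)).card ≤ (Finset.range m).card := by
      apply Finset.card_le_card_of_injOn (fun x => x / t)
      · intro x hx
        rw [Finset.mem_coe, Finset.mem_filter] at hx
        have := hsub hx.1
        rw [Finset.mem_Icc] at this
        rw [Finset.mem_coe, Finset.mem_range]
        have hmt : 1 ≤ m * t := Nat.one_le_iff_ne_zero.mpr (Nat.mul_ne_zero (by omega) (by omega))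
        have hcommm : m * t = t * m := Nat.mul_comm m t
        have hlt : x < t * m := by omega
        exact Nat.div_lt_of_lt_mul hlt
      · intro a ha b hb hab
        rw [Finset.mem_coe, Finset.mem_filter] at ha hb
        have h1 := Nat.mod_add_div a t
        have h2 := Nat.mod_add_div b t
        simp only at hab
        have h3 : t * (a / t) = t * (b / t) := by rw [hab]
        omega
    simpa using this
  · intro i hi1 hi2
    rw [Nat.mul_eq_zero]
    by_contra hcon
    push_neg at hcon
    obtain ⟨h1, h2⟩ := hcon
    unfold Partn.nFn at h1 h2
    rw [← Nat.pos_iff_ne_zero, Finset.card_pos] at h1 h2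
    obtain ⟨x, hx⟩ := h1
    obtain ⟨z, hz⟩ := h2
    rw [Finset.mem_filter] at hx hz
    have hxb : i ∈ lam.betaSet := hx.2 ▸ mod_mem ht1 hc1 hx.1
    have hzb : i + 1 ∈ lam.betaSet := hz.2 ▸ mod_mem ht1 hc1 hz.1
    exact no_consec hd hxb hzb
end

section
/- Let t ≥ 2 and m ≥ 1 be integers, and let 1 ≤ r ≤ ⌊t/2⌋. Let λ^r be the partition whose β-set is ⋃_{j=1}^{r} { k·t + (t+1−2j) : 0 ≤ k ≤ m−1 }. Then λ^r is a (t, mt+1)-core partition with distinct parts, and its size equals −r²·(m²+2m)/2 + r·(m²t+mt+m)/2. -/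
namespace Partn

lemma colLen_le_length (l : Partn) (j : ℕ) : l.colLen j ≤ l.parts.length :=
  List.length_filter_le _ _

lemma lt_colLen (l : Partn) {i j : ℕ} (hi : i < l.parts.length) (hj : j ≤ l.parts.getD i 0) :
    i < l.colLen j := by
  have hsplit : l.parts = l.parts.take (i+1) ++ l.parts.drop (i+1) :=
    (List.take_append_drop _ _).symm
  have htake : (l.parts.take (i+1)).filter (fun p => j ≤ p) = l.parts.take (i+1) := by
    apply List.filter_eq_self.2
    intro a ha
    obtain ⟨k, hk, hka⟩ := List.mem_take_iff_getElem.1 ha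
    have hk' : k < l.parts.length := lt_of_lt_of_le (lt_of_lt_of_le hk (min_le_left _ _)) hi
    have : l.parts[k] ≥ l.parts[i] := by
      rcases Nat.lt_or_ge k i with h | h
      · exact l.sorted.rel_get_of_lt (a := ⟨k, hk'⟩) (b := ⟨i, hi⟩) h
      · have : k = i := le_antisymm (by omega) h
        subst this; exact le_refl _
    have hgd : l.parts.getD i 0 = l.parts[i] := List.getD_eq_getElem _ _ hi
    simp only [decide_eq_true_eq]
    omega
  have hcl : l.colLen j = ((l.parts.take (i+1)).filter (fun p => j ≤ p)).length
      + ((l.parts.drop (i+1)).filter (fun p => j ≤ p)).length := by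
    unfold colLen
    conv_lhs => rw [hsplit]
    rw [List.filter_append, List.length_append]
  rw [hcl, htake]
  have : (l.parts.take (i+1)).length = i+1 := List.length_take_of_le (by omega)
  omega

lemma colLen_le_s17 (l : Partn) {k j : ℕ} (hk : k < l.parts.length) (hj : l.parts.getD k 0 < j) :
    l.colLen j ≤ k := by
  have hsplit : l.parts = l.parts.take k ++ l.parts.drop k :=
    (List.take_append_drop _ _).symm
  have hdrop : (l.parts.drop k).filter (fun p => j ≤ p) = [] := by
    apply List.filter_eq_nil_iff.2
    intro a ha
    obtain ⟨u, hu, hua⟩ := List.mem_iff_getElem.1 ha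
    rw [List.getElem_drop] at hua
    have hku : k + u < l.parts.length := by
      have := hu; rw [List.length_drop] at this; omega
    have : l.parts[k + u] ≤ l.parts[k] := by
      rcases Nat.eq_or_lt_of_le (Nat.le_add_right k u) with h | h
      · simp [← h]
      · exact l.sorted.rel_get_of_lt (a := ⟨k, hk⟩) (b := ⟨k+u, hku⟩) h
    have hgd : l.parts.getD k 0 = l.parts[k] := List.getD_eq_getElem _ _ hk
    simp only [decide_eq_true_eq]
    omega
  have hcl : l.colLen j = ((l.parts.take k).filter (fun p => j ≤ p)).length := by
    unfold colLen
    conv_lhs => rw [hsplit]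
    rw [List.filter_append, List.length_append, hdrop]
    simp
  rw [hcl]
  calc ((l.parts.take k).filter _).length ≤ (l.parts.take k).length := List.length_filter_le _ _
    _ ≤ k := List.length_take_le _ _

lemma hook_add_eq (l : Partn) {i j : ℕ} (hi : i < l.parts.length)
    (hj1 : 1 ≤ j) (hj : j ≤ l.parts.getD i 0) :
    l.hook i j + (j + l.parts.length - 1 - l.colLen j)
      = l.parts.getD i 0 + (l.parts.length - 1 - i) := by
  have h1 := l.colLen_le_length j
  have h2 := l.lt_colLen hi hj
  unfold hook
  omega

lemma one_le_hook (l : Partn) (i j : ℕ) : 1 ≤ l.hook i j := by unfold hook; omega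

lemma b_not_mem (l : Partn) {j : ℕ} (hj1 : 1 ≤ j) :
    (j + l.parts.length - 1 - l.colLen j) ∉ l.betaSet := by
  intro hmem
  obtain ⟨k, hk, heq⟩ := Finset.mem_image.1 hmem
  rw [Finset.mem_range] at hk
  have h1 := l.colLen_le_length j
  rcases Nat.lt_or_ge (l.parts.getD k 0) j with h | h
  · have := l.colLen_le_s17 hk h
    omega
  · have := l.lt_colLen hk h
    omega

end Partn

/-- the parts of `λ^r`, as a function of the index. -/
def Ffun (s m r i : ℕ) : ℕ := (m - i / r) * s - i % r

lemma Ffun_lt (s m r : ℕ) (hr : 1 ≤ r) (hrs : r ≤ s) {i i' : ℕ}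
    (h : i < i') (h' : i' < m * r) : Ffun s m r i' < Ffun s m r i := by
  unfold Ffun
  have hu : i % r < r := Nat.mod_lt _ hr
  have hu' : i' % r < r := Nat.mod_lt _ hr
  have hd : r * (i / r) + i % r = i := Nat.div_add_mod i r
  have hd' : r * (i' / r) + i' % r = i' := Nat.div_add_mod i' r
  have hq' : i' / r < m := Nat.div_lt_of_lt_mul (by rw [Nat.mul_comm] at h'; exact h')
  have hqq : i / r ≤ i' / r := Nat.div_le_div_right h.le
  rcases eq_or_lt_of_le hqq with heq | hlt
  · rw [← heq]
    have huu : i % r < i' % r := by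
      rw [← heq] at hd'
      omega
    obtain ⟨A, hA⟩ : ∃ A, (m - i / r) * s = A := ⟨_, rfl⟩
    have hAs : s ≤ (m - i / r) * s := Nat.le_mul_of_pos_left s (by omega)
    rw [hA] at hAs ⊢
    omega
  · have h5 : (m - i' / r) * s + s ≤ (m - i / r) * s := by
      have : (m - i' / r + 1) * s ≤ (m - i / r) * s :=
        Nat.mul_le_mul_right s (by omega)
      rw [Nat.add_one_mul] at this
      exact this
    obtain ⟨A, hA⟩ : ∃ A, (m - i / r) * s = A := ⟨_, rfl⟩
    obtain ⟨A', hA'⟩ : ∃ A', (m - i' / r) * s = A' := ⟨_, rfl⟩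
    rw [hA, hA'] at h5 ⊢
    omega


lemma div_aux (r q u : ℕ) (hr : 0 < r) (hu : u < r) : (q * r + u) / r = q := by
  rw [show q * r + u = r * q + u from by ring, Nat.mul_add_div hr, Nat.div_eq_of_lt hu,
    Nat.add_zero]

lemma mod_aux (r q u : ℕ) (hu : u < r) : (q * r + u) % r = u := by
  rw [show q * r + u = r * q + u from by ring, Nat.mul_add_mod, Nat.mod_eq_of_lt hu]

lemma beta_val (s m r : ℕ) (hm : 1 ≤ m) (hr : 1 ≤ r) (hrs : r ≤ s) {i q u : ℕ}
    (hq : q < m) (hu : u < r) (hi : i = q * r + u) :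
    Ffun s m r i + (m * r - 1 - i) = (m - 1 - q) * (r + s) + ((r + s) + 1 - 2 * (u + 1)) := by
  unfold Ffun
  rw [hi, div_aux r q u (by omega) hu, mod_aux r q u hu]
  have hc1 : u ≤ (m - q) * s := by
    have : s ≤ (m - q) * s := Nat.le_mul_of_pos_left s (by omega)
    omega
  have hc2 : q * r + u + 1 ≤ m * r := by
    have : (q + 1) * r ≤ m * r := Nat.mul_le_mul_right r (by omega)
    rw [Nat.add_one_mul] at this
    omega
  have hc3 : q * r + u ≤ m * r - 1 := by omega
  have hc4 : 1 ≤ m * r := by omega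
  have hc5 : q ≤ m - 1 := by omega
  have hc6 : 2 * (u + 1) ≤ (r + s) + 1 := by omega
  zify [hc1, hc3, hc4, hc5, hc6, hm, hq.le]
  ring

lemma list_sum_range (f : ℕ → ℕ) (n : ℕ) :
    ((List.range n).map f).sum = ∑ i ∈ Finset.range n, f i := by
  induction n with
  | zero => simp
  | succ n ih =>
    rw [List.range_succ, List.map_append, List.sum_append, Finset.sum_range_succ, ih]
    simp

lemma gauss (n : ℕ) (hn : 1 ≤ n) :
    (∑ i ∈ Finset.range n, (i : ℚ)) = (n : ℚ) * ((n : ℚ) - 1) / 2 := by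
  have h := congrArg (Nat.cast : ℕ → ℚ) (Finset.sum_range_id_mul_two n)
  push_cast [Nat.cast_sub hn] at h
  linarith

/-- The partition `λ^r` with β-set `⋃_(j=1)^r {kt + (t+1−2j) : 0 ≤ k ≤ m−1}` is a
`(t, mt+1)`-core partition with distinct parts of size
`−r²(m²+2m)/2 + r(m²t+mt+m)/2`. -/
theorem lambda_r_t_mt_add_one (t m r : ℕ) (ht : 2 ≤ t) (hm : 1 ≤ m)
    (hr1 : 1 ≤ r) (hr2 : r ≤ t / 2) :
    ∃ lam : Partn,
      lam.betaSet = (Finset.Icc 1 r).biUnion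
        (fun j => (Finset.range m).image (fun k => k * t + (t + 1 - 2 * j))) ∧
      lam.IsCore t ∧ lam.IsCore (m * t + 1) ∧ lam.DistinctParts ∧
      (lam.size : ℚ) = -(r : ℚ) ^ 2 * ((m : ℚ) ^ 2 + 2 * m) / 2
        + (r : ℚ) * ((m : ℚ) ^ 2 * t + m * t + m) / 2 := by
  obtain ⟨s, rfl⟩ : ∃ s, t = r + s := ⟨t - r, by omega⟩
  have hrs : r ≤ s := by omega
  have hs1 : 1 ≤ s := by omega
  -- the partition
  have hpairwise : ((List.range (m*r)).map (Ffun s m r)).Pairwise (· > ·) := by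
    rw [List.pairwise_iff_getElem]
    intro a b ha hb hab
    simp only [List.length_map, List.length_range] at ha hb
    simp only [List.getElem_map, List.getElem_range]
    exact Ffun_lt s m r hr1 hrs hab hb
  have hpos : ∀ p ∈ (List.range (m*r)).map (Ffun s m r), 0 < p := by
    intro p hp
    obtain ⟨i, hi, rfl⟩ := List.mem_map.1 hp
    rw [List.mem_range] at hi
    unfold Ffun
    have hu : i % r < r := Nat.mod_lt _ hr1
    have hq : i / r < m := Nat.div_lt_of_lt_mul (by rw [Nat.mul_comm] at hi; exact hi)
    have hAs : s ≤ (m - i / r) * s := Nat.le_mul_of_pos_left s (by omega)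
    obtain ⟨A, hA⟩ : ∃ A, (m - i / r) * s = A := ⟨_, rfl⟩
    rw [hA] at hAs ⊢
    omega
  set lam : Partn := ⟨(List.range (m*r)).map (Ffun s m r), hpos,
    hpairwise.imp (fun h => le_of_lt h)⟩ with hlam
  have hlen : lam.parts.length = m * r := by
    simp [hlam]
  have hgetD : ∀ i, i < m * r → lam.parts.getD i 0 = Ffun s m r i := by
    intro i hi
    have hi' : i < lam.parts.length := by rw [hlen]; exact hi
    rw [List.getD_eq_getElem _ _ hi']
    simp [hlam]
  have hbval : ∀ i, i < m * r →
      lam.parts.getD i 0 + (m * r - 1 - i)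
        = (m - 1 - i / r) * (r + s) + ((r + s) + 1 - 2 * (i % r + 1)) := by
    intro i hi
    rw [hgetD i hi]
    exact beta_val s m r hm hr1 hrs
      (Nat.div_lt_of_lt_mul (by rw [Nat.mul_comm] at hi; exact hi))
      (Nat.mod_lt _ hr1) (Nat.div_add_mod' i r).symm
  -- the beta set
  have hbeta : lam.betaSet = (Finset.Icc 1 r).biUnion
      (fun j => (Finset.range m).image (fun k => k * (r + s) + ((r + s) + 1 - 2 * j))) := by
    ext x
    constructor
    · intro hx
      obtain ⟨i, hi, hix⟩ := Finset.mem_image.1 hx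
      rw [Finset.mem_range, hlen] at hi
      rw [hlen, hbval i hi] at hix
      obtain ⟨q, u, hq, hu, hiq, hiu⟩ : ∃ q u, q < m ∧ u < r ∧ i / r = q ∧ i % r = u :=
        ⟨_, _, Nat.div_lt_of_lt_mul (by rw [Nat.mul_comm] at hi; exact hi),
          Nat.mod_lt _ hr1, rfl, rfl⟩
      rw [hiq, hiu] at hix
      refine Finset.mem_biUnion.2 ⟨u + 1,
        Finset.mem_Icc.2 ⟨by omega, by omega⟩,
        Finset.mem_image.2 ⟨m - 1 - q, Finset.mem_range.2 (by omega), hix⟩⟩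
    · intro hx
      obtain ⟨j, hj, hx2⟩ := Finset.mem_biUnion.1 hx
      obtain ⟨k, hk, hkx⟩ := Finset.mem_image.1 hx2
      rw [Finset.mem_Icc] at hj
      rw [Finset.mem_range] at hk
      have hi : (m - 1 - k) * r + (j - 1) < m * r := by
        have : (m - 1 - k + 1) * r ≤ m * r := Nat.mul_le_mul_right r (by omega)
        rw [Nat.add_one_mul] at this
        omega
      refine Finset.mem_image.2 ⟨(m - 1 - k) * r + (j - 1),
        Finset.mem_range.2 (by rw [hlen]; exact hi), ?_⟩
      rw [hlen, hbval _ hi, div_aux r _ _ (by omega) (by omega),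
        mod_aux r _ _ (by omega)]
      rw [show m - 1 - (m - 1 - k) = k from by omega, show j - 1 + 1 = j from by omega]
      exact hkx
  refine ⟨lam, hbeta, ?_, ?_, hpairwise, ?_⟩
  -- IsCore t
  · intro i j hi hj1 hj2 hdvd
    rw [hlen] at hi
    have hkey := lam.hook_add_eq (by rw [hlen]; exact hi) hj1 hj2
    rw [hlen, hbval i hi] at hkey
    obtain ⟨d, hd⟩ := hdvd
    have hhook1 := lam.one_le_hook i j
    obtain ⟨q, u, hqm, humr, hiq, hiu⟩ : ∃ q u, q < m ∧ u < r ∧ i / r = q ∧ i % r = u :=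
      ⟨_, _, Nat.div_lt_of_lt_mul (by rw [Nat.mul_comm] at hi; exact hi),
        Nat.mod_lt _ hr1, rfl, rfl⟩
    rw [hiq, hiu] at hkey
    have hd1 : 1 ≤ d := by
      rcases Nat.eq_zero_or_pos d with h | h
      · rw [h, Nat.mul_zero] at hd; omega
      · exact h
    have hdq : d ≤ m - 1 - q := by
      by_contra hcon
      have h6 : (r + s) * (m - 1 - q + 1) ≤ (r + s) * d :=
        Nat.mul_le_mul_left _ (by omega)
      have e1 : (r + s) * (m - 1 - q + 1) = (m - 1 - q) * (r + s) + (r + s) := by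
        ring
      omega
    have e2 : (m - 1 - q - d) * (r + s) + d * (r + s) = (m - 1 - q) * (r + s) := by
      rw [← Nat.add_mul]
      congr 1
      omega
    have e3 : d * (r + s) = (r + s) * d := Nat.mul_comm _ _
    have hb : j + lam.parts.length - 1 - lam.colLen j
        = (m - 1 - q - d) * (r + s) + ((r + s) + 1 - 2 * (u + 1)) := by
      omega
    have hmem : j + lam.parts.length - 1 - lam.colLen j ∈ lam.betaSet := by
      rw [hbeta, hb]
      exact Finset.mem_biUnion.2 ⟨u + 1, Finset.mem_Icc.2 ⟨by omega, by omega⟩,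
        Finset.mem_image.2 ⟨m - 1 - q - d, Finset.mem_range.2 (by omega), rfl⟩⟩
    exact lam.b_not_mem hj1 hmem
  -- IsCore (m*t+1)
  · intro i j hi hj1 hj2 hdvd
    rw [hlen] at hi
    have hkey := lam.hook_add_eq (by rw [hlen]; exact hi) hj1 hj2
    rw [hlen, hbval i hi] at hkey
    have hhook1 := lam.one_le_hook i j
    obtain ⟨q, u, hqm, humr, hiq, hiu⟩ : ∃ q u, q < m ∧ u < r ∧ i / r = q ∧ i % r = u :=
      ⟨_, _, Nat.div_lt_of_lt_mul (by rw [Nat.mul_comm] at hi; exact hi),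
        Nat.mod_lt _ hr1, rfl, rfl⟩
    rw [hiq, hiu] at hkey
    have h7 : (m - 1 - q) * (r + s) ≤ (m - 1) * (r + s) :=
      Nat.mul_le_mul_right _ (by omega)
    have e4 : (m - 1) * (r + s) + (r + s) = m * (r + s) := by
      rw [← Nat.add_one_mul]
      congr 1
      omega
    have h8 : m * (r + s) + 1 ≤ lam.hook i j := Nat.le_of_dvd (by omega) hdvd
    omega
  -- size
  · have hsum : lam.size = ∑ i ∈ Finset.range (m * r), Ffun s m r i := by
      show ((List.range (m*r)).map (Ffun s m r)).sum = _
      exact list_sum_range _ _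
    have hcast : (lam.size : ℚ) = ∑ i ∈ Finset.range (m * r), ((Ffun s m r i : ℕ) : ℚ) := by
      rw [hsum]
      push_cast
      rfl
    have hre : ∑ i ∈ Finset.range (m * r), ((Ffun s m r i : ℕ) : ℚ)
        = ∑ p ∈ Finset.range m ×ˢ Finset.range r, ((Ffun s m r (p.1 * r + p.2) : ℕ) : ℚ) := by
      refine Finset.sum_bij' (fun i _ => (i / r, i % r)) (fun p _ => p.1 * r + p.2)
        ?_ ?_ ?_ ?_ ?_
      · intro a ha
        rw [Finset.mem_range] at ha
        refine Finset.mem_product.2 ⟨Finset.mem_range.2 ?_, Finset.mem_range.2 ?_⟩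
        · exact Nat.div_lt_of_lt_mul (by rw [Nat.mul_comm] at ha; exact ha)
        · exact Nat.mod_lt _ hr1
      · intro p hp
        rw [Finset.mem_product, Finset.mem_range, Finset.mem_range] at hp
        refine Finset.mem_range.2 ?_
        show p.1 * r + p.2 < m * r
        have : (p.1 + 1) * r ≤ m * r := Nat.mul_le_mul_right r (by omega)
        rw [Nat.add_one_mul] at this
        omega
      · intro a ha
        exact Nat.div_add_mod' a r
      · intro p hp
        rw [Finset.mem_product, Finset.mem_range, Finset.mem_range] at hp
        ext
        · exact div_aux r _ _ (by omega) hp.2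
        · exact mod_aux r _ _ hp.2
      · intro a ha
        rw [Nat.div_add_mod']
    have hval : ∀ p ∈ Finset.range m ×ˢ Finset.range r,
        ((Ffun s m r (p.1 * r + p.2) : ℕ) : ℚ) = ((m : ℚ) - p.1) * s - p.2 := by
      intro p hp
      rw [Finset.mem_product, Finset.mem_range, Finset.mem_range] at hp
      have hF : Ffun s m r (p.1 * r + p.2) = (m - p.1) * s - p.2 := by
        unfold Ffun
        rw [div_aux r _ _ (by omega) hp.2, mod_aux r _ _ hp.2]
      rw [hF]
      have hc1 : p.2 ≤ (m - p.1) * s := by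
        have : s ≤ (m - p.1) * s := Nat.le_mul_of_pos_left s (by omega)
        omega
      push_cast [Nat.cast_sub hc1, Nat.cast_sub hp.1.le]
      ring
    rw [hcast, hre, Finset.sum_congr rfl hval, Finset.sum_product]
    have hinner : ∀ q ∈ Finset.range m,
        (∑ u ∈ Finset.range r, (((m : ℚ) - q) * s - u))
          = (r : ℚ) * (((m : ℚ) - q) * s) - (r : ℚ) * ((r : ℚ) - 1) / 2 := by
      intro q hq
      rw [Finset.sum_sub_distrib, Finset.sum_const, Finset.card_range, gauss r hr1]
      simp [mul_comm]
    rw [Finset.sum_congr rfl hinner, Finset.sum_sub_distrib, Finset.sum_const,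
      Finset.card_range]
    have houter : ∑ q ∈ Finset.range m, ((r : ℚ) * (((m : ℚ) - q) * s))
        = (r : ℚ) * s * ((m : ℚ) * m - (m : ℚ) * ((m : ℚ) - 1) / 2) := by
      rw [show (fun q : ℕ => (r : ℚ) * (((m : ℚ) - q) * s))
          = (fun q : ℕ => (r : ℚ) * s * (m : ℚ) - (r : ℚ) * s * (q : ℚ)) from by
        funext q; ring]
      rw [Finset.sum_sub_distrib, Finset.sum_const, Finset.card_range, ← Finset.mul_sum,
        gauss m hm]
      ring
    rw [houter]
    push_cast
    ring
end
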